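/- arXiv:2406.13670 — 5 statements merged into one kernel-verified Lean document; each statement's English description precedes it below -/
import Mathlib

section
/- Let Δ be a simplicial forest and let M = {F₁, …, F_r} and N = {G₁, …, G_r} be two r-matchings of Δ such that F₁ ∪ ⋯ ∪ F_r = G₁ ∪ ⋯ ∪ G_r. Then M = N. -/
noncomputable section

open Finset MvPolynomial

/-- A simplicial complex on the vertex type `V`: a finite, nonempty collection of
finite subsets of `V` that is closed under taking subsets. -/
structure SimplicialComplex (V : Type) [DecidableEq V] : Type where
  faces : Finset (Finset V)
  nonempty' : faces.Nonempty
  down_closed : ∀ ⦃F G : Finset V⦄, F ∈ faces → G ⊆ F → G ∈ faces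

namespace SimplicialComplex

variable {V : Type} [DecidableEq V]

open scoped Classical in
/-- The facets: the maximal faces with respect to inclusion. -/
def facets (Δ : SimplicialComplex V) : Finset (Finset V) :=
  Δ.faces.filter fun F => ∀ G ∈ Δ.faces, F ⊆ G → F = G

/-- A matching: a set of pairwise disjoint facets. -/
def IsMatching (Δ : SimplicialComplex V) (M : Finset (Finset V)) : Prop :=
  M ⊆ Δ.facets ∧ ∀ F ∈ M, ∀ G ∈ M, F ≠ G → F ∩ G = ∅

/-- The matching number `ν(Δ)`: the maximum cardinality of a matching. -/
def matchingNumber (Δ : SimplicialComplex V) : ℕ :=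
  sSup {r : ℕ | ∃ M : Finset (Finset V), Δ.IsMatching M ∧ M.card = r}

/-- `F` is a leaf of the subcomplex generated by the facet set `S`: either `F` is
the only facet, or there is another facet `G` with `H ∩ F ⊆ G ∩ F` for all
facets `H ≠ F`. -/
def IsLeafIn (S : Finset (Finset V)) (F : Finset V) : Prop :=
  F ∈ S ∧ (S = {F} ∨ ∃ G ∈ S, G ≠ F ∧ ∀ H ∈ S, H ≠ F → H ∩ F ⊆ G ∩ F)

/-- A simplicial forest: every nonempty subcomplex has a leaf (equivalently,
every connected component is a simplicial tree). -/
def IsForest (Δ : SimplicialComplex V) : Prop :=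
  ∀ S ⊆ Δ.facets, S.Nonempty → ∃ F, IsLeafIn S F

/-- Connectedness: any two facets are joined by a chain of facets in which
consecutive facets intersect nontrivially. -/
def Connected (Δ : SimplicialComplex V) : Prop :=
  ∀ F ∈ Δ.facets, ∀ G ∈ Δ.facets,
    Relation.ReflTransGen
      (fun A B => A ∈ Δ.facets ∧ B ∈ Δ.facets ∧ (A ∩ B).Nonempty) F G

/-- A simplicial tree: a connected simplicial forest. -/
def IsTree (Δ : SimplicialComplex V) : Prop := Δ.Connected ∧ Δ.IsForest

/-- A good leaf: a facet which is a leaf of every subcomplex containing it. -/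
def IsGoodLeaf (Δ : SimplicialComplex V) (F : Finset V) : Prop :=
  F ∈ Δ.facets ∧ ∀ S ⊆ Δ.facets, F ∈ S → IsLeafIn S F

/-- Two disjoint facets `F`, `G` form a gap: the induced subcomplex on `F ∪ G`
has facet set exactly `{F, G}`. -/
def FormGap (Δ : SimplicialComplex V) (F G : Finset V) : Prop :=
  F ∈ Δ.facets ∧ G ∈ Δ.facets ∧ F ∩ G = ∅ ∧
    ∀ H ∈ Δ.facets, H ⊆ F ∪ G → H = F ∨ H = G

/-- A restricted matching: a matching one of whose facets forms a gap with every
other facet of the matching. -/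
def IsRestrictedMatching (Δ : SimplicialComplex V) (M : Finset (Finset V)) : Prop :=
  Δ.IsMatching M ∧ ∃ F ∈ M, ∀ G ∈ M, G ≠ F → Δ.FormGap F G

/-- The restricted matching number `ν₀(Δ)`. -/
def restrictedMatchingNumber (Δ : SimplicialComplex V) : ℕ :=
  sSup {r : ℕ | ∃ M : Finset (Finset V), Δ.IsRestrictedMatching M ∧ M.card = r}

/-- An induced matching: a matching `M` such that the facets contained in the
union of the members of `M` are exactly the members of `M`. -/
def IsInducedMatching (Δ : SimplicialComplex V) (M : Finset (Finset V)) : Prop :=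
  Δ.IsMatching M ∧ ∀ H ∈ Δ.facets, H ⊆ M.biUnion id → H ∈ M

/-- The induced matching number `ν₁(Δ)`. -/
def inducedMatchingNumber (Δ : SimplicialComplex V) : ℕ :=
  sSup {r : ℕ | ∃ M : Finset (Finset V), Δ.IsInducedMatching M ∧ M.card = r}

/-- A proper chain of length `n` between the facets `F` and `G`. -/
def ProperChain (Δ : SimplicialComplex V) (F G : Finset V) (n : ℕ) : Prop :=
  ∃ c : ℕ → Finset V, c 0 = F ∧ c n = G ∧ (∀ i ≤ n, c i ∈ Δ.facets) ∧
    ∀ i < n, (c i ∩ c (i + 1)).card = (c (i + 1)).card - 1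

/-- The distance between two facets: the minimal length of a proper chain. -/
def dist (Δ : SimplicialComplex V) (F G : Finset V) : ℕ :=
  sInf {n : ℕ | Δ.ProperChain F G n}

/-- The intersection property for a pure complex whose facets have cardinality
`t` (`= d + 1`): it is connected in codimension 1, and any two facets `F`, `G`
with `|F ∩ G| = t - k` (`1 ≤ k ≤ t`) satisfy `dist(F, G) = k`. -/
def HasIntersectionProperty (Δ : SimplicialComplex V) (t : ℕ) : Prop :=
  (∀ F ∈ Δ.facets, F.card = t) ∧
    (∀ F ∈ Δ.facets, ∀ G ∈ Δ.facets, ∃ n, Δ.ProperChain F G n) ∧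
    ∀ F ∈ Δ.facets, ∀ G ∈ Δ.facets, ∀ k, 1 ≤ k → k ≤ t →
      (F ∩ G).card = t - k → Δ.dist F G = k

end SimplicialComplex

/-- The simplicial complex generated by a finite family of faces. -/
def ofFacets {V : Type} [DecidableEq V] (ℱ : Finset (Finset V)) :
    SimplicialComplex V where
  faces := insert ∅ (ℱ.biUnion Finset.powerset)
  nonempty' := ⟨∅, Finset.mem_insert_self _ _⟩
  down_closed := by
    intro F G hF hGF
    rcases Finset.mem_insert.mp hF with h | h
    · subst h
      exact Finset.mem_insert.mpr <| Or.inl (Finset.subset_empty.mp hGF)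
    · rcases Finset.mem_biUnion.mp h with ⟨A, hA, hFA⟩
      exact Finset.mem_insert.mpr <| Or.inr <| Finset.mem_biUnion.mpr
        ⟨A, hA, Finset.mem_powerset.mpr (hGF.trans (Finset.mem_powerset.mp hFA))⟩

/-- The ideal of `K[x_v : v ∈ V]` generated by the products
`x_{F₁} ⋯ x_{F_k}` over all `k`-matchings `{F₁, …, F_k}` taken from the facet
set `ℱ`.  For `ℱ = ℱ(Δ)` this is the `k`-th squarefree power `I(Δ)^{[k]}` of the
facet ideal `I(Δ)` (and the facet ideal itself for `k = 1`). -/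
def matchPow (K : Type) [Field K] {V : Type} [DecidableEq V]
    (ℱ : Finset (Finset V)) (k : ℕ) : Ideal (MvPolynomial V K) :=
  Ideal.span {p | ∃ M : Finset (Finset V), M ⊆ ℱ ∧
    (∀ F ∈ M, ∀ G ∈ M, F ≠ G → F ∩ G = ∅) ∧ M.card = k ∧
    p = ∏ F ∈ M, ∏ v ∈ F, (X v : MvPolynomial V K)}

/-- The `k`-th squarefree power `I(Δ)^{[k]}` of the facet ideal of `Δ`. -/
def sqfreePower (K : Type) [Field K] {V : Type} [DecidableEq V]
    (Δ : SimplicialComplex V) (k : ℕ) : Ideal (MvPolynomial V K) :=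
  matchPow K Δ.facets k

/-- `p` is a monomial with coefficient `1`. -/
def IsMonomialOne {K : Type} [Field K] {V : Type} (p : MvPolynomial V K) : Prop :=
  ∃ d : V →₀ ℕ, p = monomial d 1

/-- `u` is a minimal monomial generator of the monomial ideal `I`: `u` is a
monomial of `I` which is not strictly divisible by any monomial of `I`. -/
def IsMinGen {K : Type} [Field K] {V : Type} (I : Ideal (MvPolynomial V K))
    (u : MvPolynomial V K) : Prop :=
  IsMonomialOne u ∧ u ∈ I ∧
    ∀ v : MvPolynomial V K, IsMonomialOne v → v ∈ I → v ∣ u → v = u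

/-- A monomial ideal `I` has linear quotients: its minimal monomial generators
can be listed as `f₁, …, f_m` so that each colon ideal
`(f₁, …, f_{i-1}) : (f_i)` is generated by a subset of the variables. -/
def HasLinearQuotients {K : Type} [Field K] {V : Type}
    (I : Ideal (MvPolynomial V K)) : Prop :=
  ∃ L : List (MvPolynomial V K), L.Nodup ∧ (∀ u, u ∈ L ↔ IsMinGen I u) ∧
    ∀ i : ℕ, ∀ hi : i < L.length, 1 ≤ i →
      ∃ s : Set V,
        Submodule.colon (Ideal.span {q | q ∈ L.take i}) (Ideal.span {L.get ⟨i, hi⟩}) =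
          Ideal.span ((fun v => (X v : MvPolynomial V K)) '' s)

/-- The degree of the monomial with exponent vector `d`. -/
def degOf {V : Type} (d : V →₀ ℕ) : ℕ := d.sum fun _ n => n

/-- The edge relation of the induced graph `G_I^{(u,v)}` of Bigdeli–Herzog–Zheng,
for a monomial ideal `I` generated in degree `d`, where `m` is the exponent
vector of `lcm(u, v)`: two minimal monomial generators (identified with their
exponent vectors) dividing `lcm(u, v)` are adjacent when their lcm has degree
`d + 1`. -/
def EdgeRel (K : Type) [Field K] {V : Type} [DecidableEq V]
    (I : Ideal (MvPolynomial V K)) (d : ℕ) (m : V →₀ ℕ) (u v : V →₀ ℕ) : Prop :=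
  IsMinGen I (monomial u (1 : K)) ∧ IsMinGen I (monomial v (1 : K)) ∧
    u ≤ m ∧ v ≤ m ∧ degOf (u ⊔ v) = d + 1

/-- The combinatorial criterion of Bigdeli–Herzog–Zheng for a monomial ideal `I`
generated in degree `d` to be linearly related: any two minimal monomial
generators `u`, `v` are connected by a path in `G_I^{(u,v)}`. -/
def LinearlyRelatedVia (K : Type) [Field K] {V : Type} [DecidableEq V]
    (I : Ideal (MvPolynomial V K)) (d : ℕ) : Prop :=
  ∀ a b : V →₀ ℕ, IsMinGen I (monomial a (1 : K)) → IsMinGen I (monomial b (1 : K)) →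
    Relation.ReflTransGen (EdgeRel K I d (a ⊔ b)) a b

/-- The `t`-path simplicial tree `Γ_{n,t}` of the path graph `P_n` on the
vertices `1, …, n`: its facets are the intervals `F_i = {i, …, i + t - 1}` for
`1 ≤ i ≤ n - t + 1`. -/
def pathFacets (n t : ℕ) : Finset (Finset ℕ) :=
  (Finset.Icc 1 (n - t + 1)).image fun i => Finset.Icc i (i + t - 1)

/-- The `t`-path simplicial tree `Γ_{n,t}` of the path graph `P_n`. -/
def pathComplex (n t : ℕ) : SimplicialComplex ℕ := ofFacets (pathFacets n t)

lemma facet_subset_facet_eq {V : Type} [DecidableEq V] (Δ : SimplicialComplex V)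
    {F G : Finset V} (hF : F ∈ Δ.facets) (hG : G ∈ Δ.facets) (h : F ⊆ G) : F = G := by
  classical
  simp only [SimplicialComplex.facets, Finset.mem_filter] at hF hG
  exact hF.2 G hG.1 h

lemma mem_other_matching {V : Type} [DecidableEq V] (Δ : SimplicialComplex V)
    {M N : Finset (Finset V)} {F G : Finset V}
    (hU : M.biUnion id = N.biUnion id)
    (hFM : F ∈ M) (hFfac : F ∈ Δ.facets) (hGfac : G ∈ Δ.facets) (hGF : G ≠ F)
    (hcov : ∀ H ∈ N, H ≠ F → H ∩ F ⊆ G ∩ F) : F ∈ N := by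
  by_contra hFN
  have hFG : F ⊆ G := by
    intro v hv
    have hvU : v ∈ N.biUnion id := by
      rw [← hU]
      exact Finset.mem_biUnion.mpr ⟨F, hFM, hv⟩
    obtain ⟨H, hHN, hvH⟩ := Finset.mem_biUnion.mp hvU
    have hHF : H ≠ F := fun h => hFN (h ▸ hHN)
    have := hcov H hHN hHF (Finset.mem_inter.mpr ⟨hvH, hv⟩)
    exact (Finset.mem_inter.mp this).1
  exact hGF (facet_subset_facet_eq Δ hFfac hGfac hFG).symm

lemma erase_biUnion_of_matching {V : Type} [DecidableEq V] {Δ : SimplicialComplex V}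
    {M : Finset (Finset V)} (hM : Δ.IsMatching M) {F : Finset V} (hFM : F ∈ M) :
    (M.erase F).biUnion id = M.biUnion id \ F := by
  ext v
  simp only [Finset.mem_biUnion, Finset.mem_erase, Finset.mem_sdiff, id]
  constructor
  · rintro ⟨H, ⟨hHF, hHM⟩, hvH⟩
    refine ⟨⟨H, hHM, hvH⟩, fun hvF => ?_⟩
    have := hM.2 H hHM F hFM hHF
    have : v ∈ H ∩ F := Finset.mem_inter.mpr ⟨hvH, hvF⟩
    simp [hM.2 H hHM F hFM hHF] at this
  · rintro ⟨⟨H, hHM, hvH⟩, hvF⟩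
    exact ⟨H, ⟨fun h => hvF (h ▸ hvH), hHM⟩, hvH⟩

/-- Two matchings of the same size in a simplicial forest with
the same union of facets coincide. -/
theorem matchings_with_equal_union_eq
    {V : Type} [DecidableEq V] (Δ : SimplicialComplex V) (hΔ : Δ.IsForest)
    (r : ℕ) (M N : Finset (Finset V))
    (hM : Δ.IsMatching M) (hN : Δ.IsMatching N)
    (hMr : M.card = r) (hNr : N.card = r)
    (hU : M.biUnion id = N.biUnion id) :
    M = N := by
  classical
  induction r generalizing M N with
  | zero =>
    rw [Finset.card_eq_zero] at hMr hNr
    rw [hMr, hNr]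
  | succ r ih =>
    have hSsub : M ∪ N ⊆ Δ.facets := Finset.union_subset hM.1 hN.1
    have hMne : M.Nonempty := Finset.card_pos.mp (by omega)
    have hSne : (M ∪ N).Nonempty := hMne.mono Finset.subset_union_left
    obtain ⟨F, hFS, hleaf⟩ := hΔ _ hSsub hSne
    rcases hleaf with hsing | ⟨G, hGS, hGF, hG⟩
    · -- M ∪ N = {F}
      have hMsub : M ⊆ {F} := hsing ▸ Finset.subset_union_left
      have hNsub : N ⊆ {F} := hsing ▸ Finset.subset_union_right
      have hM1 : M = {F} := by
        rcases Finset.subset_singleton_iff.mp hMsub with h | h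
        · exact absurd h hMne.ne_empty
        · exact h
      have hNne : N.Nonempty := Finset.card_pos.mp (by omega)
      have hN1 : N = {F} := by
        rcases Finset.subset_singleton_iff.mp hNsub with h | h
        · exact absurd h hNne.ne_empty
        · exact h
      rw [hM1, hN1]
    · -- leaf case
      have hFfac : F ∈ Δ.facets := hSsub hFS
      have hGfac : G ∈ Δ.facets := hSsub hGS
      have hFMN : F ∈ M ∧ F ∈ N := by
        rcases Finset.mem_union.mp hFS with hFM | hFN
        · refine ⟨hFM, mem_other_matching Δ hU hFM hFfac hGfac hGF fun H hHN hHF =>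
            hG H (Finset.mem_union_right _ hHN) hHF⟩
        · refine ⟨mem_other_matching Δ hU.symm hFN hFfac hGfac hGF fun H hHM hHF =>
            hG H (Finset.mem_union_left _ hHM) hHF, hFN⟩
      obtain ⟨hFM, hFN⟩ := hFMN
      have hM' : Δ.IsMatching (M.erase F) :=
        ⟨(Finset.erase_subset _ _).trans hM.1, fun A hA B hB hAB =>
          hM.2 A (Finset.mem_of_mem_erase hA) B (Finset.mem_of_mem_erase hB) hAB⟩
      have hN' : Δ.IsMatching (N.erase F) :=
        ⟨(Finset.erase_subset _ _).trans hN.1, fun A hA B hB hAB =>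
          hN.2 A (Finset.mem_of_mem_erase hA) B (Finset.mem_of_mem_erase hB) hAB⟩
      have hU' : (M.erase F).biUnion id = (N.erase F).biUnion id := by
        rw [erase_biUnion_of_matching hM hFM, erase_biUnion_of_matching hN hFN, hU]
      have hMr' : (M.erase F).card = r := by
        rw [Finset.card_erase_of_mem hFM, hMr]; omega
      have hNr' : (N.erase F).card = r := by
        rw [Finset.card_erase_of_mem hFN, hNr]; omega
      have heq := ih _ _ hM' hN' hMr' hNr' hU'
      have : insert F (M.erase F) = insert F (N.erase F) := by rw [heq]
      rwa [Finset.insert_erase hFM, Finset.insert_erase hFN] at this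

end
end

section
/- Let Δ be a simplicial forest on vertex set V with facets F₁, …, F_r, and set f_i = ∏_{v ∈ F_i} x_v ∈ S. For any 1 ≤ k ≤ ν(Δ), every minimal monomial generator u of I(Δ)^{[k]} can be expressed uniquely as u = f_{i₁} ⋯ f_{i_k} where {F_{i₁}, …, F_{i_k}} is a k-matching of Δ; equivalently, if two k-matchings of Δ yield the same product of facet monomials, then they are equal. -/
noncomputable section

open Finset MvPolynomial

/-- Exponent vector of the product of facet monomials over `M`. -/
def dOf {V : Type} [DecidableEq V] (M : Finset (Finset V)) : V →₀ ℕ :=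
  ∑ F ∈ M, ∑ v ∈ F, Finsupp.single v 1

lemma prod_monomial_one {K : Type} [Field K] {V : Type} {ι : Type}
    (s : Finset ι) (d : ι → (V →₀ ℕ)) :
    ∏ i ∈ s, (monomial (d i) (1 : K)) = monomial (∑ i ∈ s, d i) 1 := by
  classical
  induction s using Finset.induction with
  | empty => simp
  | @insert a s h ih =>
      rw [Finset.prod_insert h, ih, monomial_mul, one_mul, Finset.sum_insert h]

lemma prod_eq_monomial {K : Type} [Field K] {V : Type} [DecidableEq V]
    (M : Finset (Finset V)) :
    (∏ F ∈ M, ∏ v ∈ F, (X v : MvPolynomial V K)) = monomial (dOf M) 1 := by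
  have h : ∀ F : Finset V,
      (∏ v ∈ F, (X v : MvPolynomial V K)) = monomial (∑ v ∈ F, Finsupp.single v 1) 1 := by
    intro F
    rw [← prod_monomial_one F (fun v => Finsupp.single v 1)]
    simp [X]
  calc (∏ F ∈ M, ∏ v ∈ F, (X v : MvPolynomial V K))
      = ∏ F ∈ M, monomial (∑ v ∈ F, Finsupp.single v 1) (1 : K) := by
        exact Finset.prod_congr rfl fun F _ => h F
    _ = monomial (dOf M) 1 := prod_monomial_one _ _

lemma dOf_apply_ne_zero {V : Type} [DecidableEq V] (M : Finset (Finset V)) (v : V) :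
    dOf M v ≠ 0 ↔ v ∈ M.biUnion id := by
  classical
  have h1 : ∀ F : Finset V, ((∑ w ∈ F, Finsupp.single w 1 : V →₀ ℕ)) v
      = if v ∈ F then 1 else 0 := by
    intro F
    rw [Finsupp.finset_sum_apply]
    simp [Finsupp.single_apply]
  have h2 : dOf M v = ∑ F ∈ M, (if v ∈ F then 1 else 0) := by
    rw [dOf, Finsupp.finset_sum_apply]
    exact Finset.sum_congr rfl fun F _ => h1 F
  rw [h2]
  constructor
  · intro h
    by_contra hc
    apply h
    apply Finset.sum_eq_zero
    intro F hF
    simp only [Finset.mem_biUnion, id] at hc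
    split_ifs with h'
    · exact absurd ⟨F, hF, h'⟩ hc
    · rfl
  · intro h
    simp only [Finset.mem_biUnion, id] at h
    obtain ⟨F, hF, hv⟩ := h
    intro hz
    have := Finset.sum_eq_zero_iff.mp hz F hF
    simp [hv] at this

lemma biUnion_erase {V : Type} [DecidableEq V] (M : Finset (Finset V)) (F : Finset V)
    (hF : F ∈ M) (hdisj : ∀ A ∈ M, ∀ B ∈ M, A ≠ B → A ∩ B = ∅) :
    (M.erase F).biUnion id = M.biUnion id \ F := by
  ext v
  simp only [Finset.mem_biUnion, Finset.mem_sdiff, Finset.mem_erase, id]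
  constructor
  · rintro ⟨H, ⟨hHF, hHM⟩, hv⟩
    refine ⟨⟨H, hHM, hv⟩, fun hvF => ?_⟩
    have := hdisj H hHM F hF hHF
    have : v ∈ H ∩ F := Finset.mem_inter.mpr ⟨hv, hvF⟩
    rw [hdisj H hHM F hF hHF] at this
    exact absurd this (Finset.notMem_empty v)
  · rintro ⟨⟨H, hHM, hv⟩, hvF⟩
    exact ⟨H, ⟨fun h => hvF (h ▸ hv), hHM⟩, hv⟩

/-- In a simplicial forest, a matching is determined by its vertex set. -/
lemma matching_ext {V : Type} [DecidableEq V] (Δ : SimplicialComplex V)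
    (hΔ : Δ.IsForest) :
    ∀ n (M M' : Finset (Finset V)), M.card = n → M'.card = n →
      M ⊆ Δ.facets → M' ⊆ Δ.facets →
      (∀ F ∈ M, ∀ G ∈ M, F ≠ G → F ∩ G = ∅) →
      (∀ F ∈ M', ∀ G ∈ M', F ≠ G → F ∩ G = ∅) →
      M.biUnion id = M'.biUnion id → M = M' := by
  intro n
  induction n with
  | zero =>
      intro M M' hM hM' _ _ _ _ _
      rw [Finset.card_eq_zero.mp hM, Finset.card_eq_zero.mp hM']
  | succ n ih =>
      intro M M' hM hM' hMf hM'f hMd hM'd hU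
      have hMne : M.Nonempty := Finset.card_pos.mp (by omega)
      have hM'ne : M'.Nonempty := Finset.card_pos.mp (by omega)
      obtain ⟨F, hFS, hleaf⟩ := hΔ (M ∪ M')
        (Finset.union_subset hMf hM'f)
        (hMne.mono Finset.subset_union_left)
      -- a leaf of M ∪ M' lies in both M and M'
      have key : ∀ (A A' : Finset (Finset V)), A ∪ A' = M ∪ M' →
          A.biUnion id = A'.biUnion id → A'.Nonempty →
          F ∈ A → F ∈ A' := by
        intro A A' hS hAU hA'ne hFA
        by_contra hFA'
        rcases hleaf with hS1 | ⟨G, hGS, hGF, hGmax⟩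
        · obtain ⟨H, hH⟩ := hA'ne
          have : H ∈ M ∪ M' := hS ▸ Finset.mem_union_right A hH
          rw [hS1, Finset.mem_singleton] at this
          exact hFA' (this ▸ hH)
        · have hFsubG : F ⊆ G := by
            intro v hv
            have hvU : v ∈ A'.biUnion id := by
              rw [← hAU]; exact Finset.mem_biUnion.mpr ⟨F, hFA, hv⟩
            obtain ⟨H, hHA', hvH⟩ := Finset.mem_biUnion.mp hvU
            have hHne : H ≠ F := fun h => hFA' (h ▸ hHA')
            have hHS : H ∈ M ∪ M' := hS ▸ Finset.mem_union_right A hHA'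
            exact (Finset.mem_inter.mp
              (hGmax H hHS hHne (Finset.mem_inter.mpr ⟨hvH, hv⟩))).1
          -- facet maximality gives F = G, contradiction
          have hFfac : F ∈ Δ.facets := (Finset.union_subset hMf hM'f) hFS
          have hGfac : G ∈ Δ.facets := (Finset.union_subset hMf hM'f) hGS
          classical
          rw [SimplicialComplex.facets, Finset.mem_filter] at hFfac hGfac
          exact hGF ((hFfac.2 G hGfac.1 hFsubG).symm)
      have hFM : F ∈ M ∧ F ∈ M' := by
        rcases Finset.mem_union.mp hFS with h | h
        · exact ⟨h, key M M' rfl hU hM'ne h⟩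
        · exact ⟨key M' M (Finset.union_comm M' M) hU.symm hMne h, h⟩
      -- erase F from both matchings and use the induction hypothesis
      have hEq : M.erase F = M'.erase F := by
        apply ih
        · rw [Finset.card_erase_of_mem hFM.1, hM]; omega
        · rw [Finset.card_erase_of_mem hFM.2, hM']; omega
        · exact (Finset.erase_subset F M).trans hMf
        · exact (Finset.erase_subset F M').trans hM'f
        · exact fun A hA B hB h => hMd A (Finset.mem_of_mem_erase hA)
            B (Finset.mem_of_mem_erase hB) h
        · exact fun A hA B hB h => hM'd A (Finset.mem_of_mem_erase hA)
            B (Finset.mem_of_mem_erase hB) h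
        · rw [biUnion_erase M F hFM.1 hMd, biUnion_erase M' F hFM.2 hM'd, hU]
      rw [← Finset.insert_erase hFM.1, ← Finset.insert_erase hFM.2, hEq]

/-- Every minimal monomial generator of the `k`-th squarefree
power of the facet ideal of a simplicial forest is the product of the facet
monomials of a unique `k`-matching. -/
theorem minGen_sqfreePower_unique_matching
    (K : Type) [Field K] {V : Type} [DecidableEq V]
    (Δ : SimplicialComplex V) (hΔ : Δ.IsForest)
    (k : ℕ) (hk1 : 1 ≤ k) (hk2 : k ≤ Δ.matchingNumber)
    (u : MvPolynomial V K) (hu : IsMinGen (sqfreePower K Δ k) u) :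
    ∃! M : Finset (Finset V), Δ.IsMatching M ∧ M.card = k ∧
      u = ∏ F ∈ M, ∏ v ∈ F, (X v : MvPolynomial V K) := by
  classical
  have hgen : {p : MvPolynomial V K | ∃ M : Finset (Finset V), M ⊆ Δ.facets ∧
      (∀ F ∈ M, ∀ G ∈ M, F ≠ G → F ∩ G = ∅) ∧ M.card = k ∧
      p = ∏ F ∈ M, ∏ v ∈ F, X v} =
      (fun d => monomial d (1 : K)) '' {d | ∃ M : Finset (Finset V), M ⊆ Δ.facets ∧
        (∀ F ∈ M, ∀ G ∈ M, F ≠ G → F ∩ G = ∅) ∧ M.card = k ∧ d = dOf M} := by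
    ext p
    constructor
    · rintro ⟨M, h1, h2, h3, rfl⟩
      exact ⟨dOf M, ⟨M, h1, h2, h3, rfl⟩, (prod_eq_monomial M).symm⟩
    · rintro ⟨d, ⟨M, h1, h2, h3, rfl⟩, rfl⟩
      exact ⟨M, h1, h2, h3, (prod_eq_monomial M).symm⟩
  obtain ⟨d, rfl⟩ := hu.1
  have hmem : (monomial d (1 : K)) ∈ Ideal.span ((fun d => monomial d (1 : K)) ''
      {d | ∃ M : Finset (Finset V), M ⊆ Δ.facets ∧
        (∀ F ∈ M, ∀ G ∈ M, F ≠ G → F ∩ G = ∅) ∧ M.card = k ∧ d = dOf M}) := by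
    rw [← hgen]
    exact hu.2.1
  have hd : d ∈ (monomial d (1 : K)).support := by
    rw [support_monomial, if_neg (one_ne_zero : (1 : K) ≠ 0)]
    exact Finset.mem_singleton_self d
  obtain ⟨d', ⟨M, h1, h2, h3, rfl⟩, hle⟩ := mem_ideal_span_monomial_image.mp hmem d hd
  have hvI : monomial (dOf M) (1 : K) ∈ sqfreePower K Δ k :=
    Ideal.subset_span ⟨M, h1, h2, h3, (prod_eq_monomial M).symm⟩
  have hdvd : monomial (dOf M) (1 : K) ∣ monomial d 1 :=
    monomial_dvd_monomial.mpr ⟨Or.inr hle, dvd_refl 1⟩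
  have heq : monomial (dOf M) (1 : K) = monomial d 1 :=
    hu.2.2 _ ⟨dOf M, rfl⟩ hvI hdvd
  have hdM : dOf M = d := monomial_left_injective (one_ne_zero : (1 : K) ≠ 0) heq
  refine ⟨M, ⟨⟨h1, h2⟩, h3, by rw [prod_eq_monomial, hdM]⟩, ?_⟩
  rintro M' ⟨⟨h1', h2'⟩, h3', hP'⟩
  have hdM' : dOf M' = d := by
    have : monomial (dOf M') (1 : K) = monomial d 1 := by
      rw [← prod_eq_monomial, ← hP']
    exact monomial_left_injective (one_ne_zero : (1 : K) ≠ 0) this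
  have hUeq : M'.biUnion id = M.biUnion id := by
    ext v
    rw [← dOf_apply_ne_zero, ← dOf_apply_ne_zero, hdM, hdM']
  exact matching_ext Δ hΔ k M' M h3' h3 h1' h1 h2' h2 hUeq

end
end

section
/- Let Δ be a simplicial forest. Then ν(Δ) − ν₀(Δ) ≤ 1, i.e., ν(Δ) ≤ ν₀(Δ) + 1. -/
noncomputable section

open Finset MvPolynomial

section ForestAux

variable {V : Type} [DecidableEq V]

/-- A "bad pair": two facets whose union contains a third facet, i.e. they fail
to form a gap. -/
def BadPair (Δ : SimplicialComplex V) (F G : Finset V) : Prop :=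
  ∃ H ∈ Δ.facets, H ⊆ F ∪ G ∧ H ≠ F ∧ H ≠ G

lemma facets_anti (Δ : SimplicialComplex V) {F G : Finset V}
    (hF : F ∈ Δ.facets) (hG : G ∈ Δ.facets) (h : F ⊆ G) : F = G := by
  classical
  rw [SimplicialComplex.facets, Finset.mem_filter] at hF hG
  exact hF.2 G hG.1 h

/-- In a simplicial forest there is no "cycle": disjoint facets `K i` arranged
cyclically with witnesses `H i ⊆ K i ∪ K (i+1)` distinct from the `K`'s. -/
lemma forest_no_cycle (Δ : SimplicialComplex V) (hΔ : Δ.IsForest) {m : ℕ}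
    (hm : 3 ≤ m) (K H : ZMod m → Finset V)
    (hK : ∀ i, K i ∈ Δ.facets) (hH : ∀ i, H i ∈ Δ.facets)
    (hdisj : ∀ i j, i ≠ j → K i ∩ K j = ∅)
    (hsub : ∀ i, H i ⊆ K i ∪ K (i + 1))
    (hne1 : ∀ i, H i ≠ K i) (hne2 : ∀ i, H i ≠ K (i + 1)) : False := by
  classical
  haveI : NeZero m := ⟨by omega⟩
  haveI : Fact (1 < m) := ⟨by omega⟩
  have h1ne0 : (1 : ZMod m) ≠ 0 := one_ne_zero
  have h2ne0 : (2 : ZMod m) ≠ 0 := by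
    intro hh
    have h2 : ((2 : ℕ) : ZMod m) = 0 := by exact_mod_cast hh
    rw [ZMod.natCast_eq_zero_iff] at h2
    have := Nat.le_of_dvd (by norm_num) h2
    omega
  have nz1 : ∀ a : ZMod m, a - 1 ≠ a := by
    intro a h
    apply h1ne0
    linear_combination -h
  have nz2 : ∀ a : ZMod m, a ≠ a + 1 := by
    intro a h
    apply h1ne0
    linear_combination -h
  have nz3 : ∀ a : ZMod m, a - 1 ≠ a + 1 := by
    intro a h
    apply h2ne0
    linear_combination -h
  have hKmem : ∀ {x : V} {a b : ZMod m}, x ∈ K a → x ∈ K b → a = b := by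
    intro x a b hxa hxb
    by_contra hne
    have h := hdisj a b hne
    have hx : x ∈ K a ∩ K b := Finset.mem_inter.mpr ⟨hxa, hxb⟩
    rw [h] at hx
    exact absurd hx (Finset.notMem_empty x)
  have hH_loc : ∀ {x : V} {a b : ZMod m}, x ∈ H a → x ∈ K b → a = b ∨ a = b - 1 := by
    intro x a b hxa hxb
    rcases Finset.mem_union.mp (hsub a hxa) with h | h
    · exact Or.inl (hKmem h hxb)
    · exact Or.inr (eq_sub_of_add_eq (hKmem h hxb))
  have hint1 : ∀ a, (H a ∩ K a).Nonempty := by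
    intro a
    rw [Finset.nonempty_iff_ne_empty]
    intro hemp
    apply hne2 a
    apply facets_anti Δ (hH a) (hK (a + 1))
    intro x hx
    rcases Finset.mem_union.mp (hsub a hx) with h | h
    · exact absurd (Finset.mem_inter.mpr ⟨hx, h⟩)
        (by rw [hemp]; exact Finset.notMem_empty x)
    · exact h
  have hint2 : ∀ a, (H a ∩ K (a + 1)).Nonempty := by
    intro a
    rw [Finset.nonempty_iff_ne_empty]
    intro hemp
    apply hne1 a
    apply facets_anti Δ (hH a) (hK a)
    intro x hx
    rcases Finset.mem_union.mp (hsub a hx) with h | h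
    · exact h
    · exact absurd (Finset.mem_inter.mpr ⟨hx, h⟩)
        (by rw [hemp]; exact Finset.notMem_empty x)
  have hKne : ∀ a b : ZMod m, a ≠ b → K a ≠ K b := by
    intro a b hab heq
    obtain ⟨x, hx⟩ := hint1 a
    have hxa : x ∈ K a := (Finset.mem_inter.mp hx).2
    exact hab (hKmem hxa (heq ▸ hxa))
  have hHKne : ∀ a b : ZMod m, H a ≠ K b := by
    intro a b heq
    obtain ⟨x, hx⟩ := hint1 a
    obtain ⟨hx1, hx2⟩ := Finset.mem_inter.mp hx
    have hxb : x ∈ K b := heq ▸ hx1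
    have hab : a = b := hKmem hx2 hxb
    exact hne1 a (by rw [heq, hab])
  have hHinj : ∀ a b : ZMod m, a ≠ b → H a ≠ H b := by
    intro a b hab heq
    obtain ⟨x, hx⟩ := hint1 a
    obtain ⟨hx1, hx2⟩ := Finset.mem_inter.mp hx
    obtain ⟨y, hy⟩ := hint2 a
    obtain ⟨hy1, hy2⟩ := Finset.mem_inter.mp hy
    have hxb : x ∈ H b := heq ▸ hx1
    have hyb : y ∈ H b := heq ▸ hy1
    rcases hH_loc hxb hx2 with h1 | h1
    · exact hab h1.symm
    · rcases hH_loc hyb hy2 with h2 | h2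
      · -- h1 : b = a - 1, h2 : b = a + 1
        apply h2ne0
        linear_combination h1 - h2
      · -- h2 : b = (a+1) - 1
        apply hab
        rw [h2]
        ring
  -- the "kept" predicate: K a is kept when neither inclusion holds
  set P : ZMod m → Prop := fun a => ¬ ((H (a - 1) ∩ K a ⊆ H a) ∨ (H a ∩ K a ⊆ H (a - 1)))
    with hP_def
  have hkeepL : ∀ a, P a → ∃ x, x ∈ H (a - 1) ∧ x ∈ K a ∧ x ∉ H a := by
    intro a hd
    simp only [hP_def, not_or] at hd
    obtain ⟨x, hx, hnx⟩ := Finset.not_subset.mp hd.1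
    obtain ⟨hx1, hx2⟩ := Finset.mem_inter.mp hx
    exact ⟨x, hx1, hx2, hnx⟩
  have hkeepR : ∀ a, P a → ∃ y, y ∈ H a ∧ y ∈ K a ∧ y ∉ H (a - 1) := by
    intro a hd
    simp only [hP_def, not_or] at hd
    obtain ⟨y, hy, hny⟩ := Finset.not_subset.mp hd.2
    obtain ⟨hy1, hy2⟩ := Finset.mem_inter.mp hy
    exact ⟨y, hy1, hy2, hny⟩
  have hdropx : ∀ a, ¬ P a → ∃ x, x ∈ H (a - 1) ∧ x ∈ H a ∧ x ∈ K a := by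
    intro a hd
    simp only [hP_def, not_not] at hd
    rcases hd with hd | hd
    · obtain ⟨x, hx⟩ := hint2 (a - 1)
      rw [sub_add_cancel] at hx
      obtain ⟨hx1, hx2⟩ := Finset.mem_inter.mp hx
      exact ⟨x, hx1, hd (Finset.mem_inter.mpr ⟨hx1, hx2⟩), hx2⟩
    · obtain ⟨y, hy⟩ := hint1 a
      obtain ⟨hy1, hy2⟩ := Finset.mem_inter.mp hy
      exact ⟨y, hd (Finset.mem_inter.mpr ⟨hy1, hy2⟩), hy1, hy2⟩
  set T : Finset (Finset V) :=
    (Finset.univ.image H) ∪ ((Finset.univ.filter P).image K) with hT_def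
  have hHT : ∀ a, H a ∈ T := fun a =>
    Finset.mem_union_left _ (Finset.mem_image_of_mem _ (Finset.mem_univ a))
  have hKT : ∀ a, P a → K a ∈ T := fun a ha =>
    Finset.mem_union_right _ (Finset.mem_image_of_mem _
      (Finset.mem_filter.mpr ⟨Finset.mem_univ a, ha⟩))
  have hTelim : ∀ B ∈ T, (∃ a, B = H a) ∨ (∃ a, P a ∧ B = K a) := by
    intro B hB
    rcases Finset.mem_union.mp hB with h | h
    · obtain ⟨a, _, ha⟩ := Finset.mem_image.mp h
      exact Or.inl ⟨a, ha.symm⟩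
    · obtain ⟨a, haf, ha⟩ := Finset.mem_image.mp h
      exact Or.inr ⟨a, (Finset.mem_filter.mp haf).2, ha.symm⟩
  have hTsub : T ⊆ Δ.facets := by
    intro B hB
    rcases hTelim B hB with ⟨a, rfl⟩ | ⟨a, _, rfl⟩
    · exact hH a
    · exact hK a
  have locG : ∀ {x : V} {a : ZMod m} {B : Finset V}, B ∈ T → x ∈ B → x ∈ K a →
      (B = H (a - 1) ∨ B = H a ∨ (P a ∧ B = K a)) := by
    intro x a B hBT hxB hxK
    rcases hTelim B hBT with ⟨c, rfl⟩ | ⟨c, hc, rfl⟩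
    · rcases hH_loc hxB hxK with h | h
      · exact Or.inr (Or.inl (by rw [h]))
      · exact Or.inl (by rw [h])
    · have : c = a := hKmem hxB hxK
      subst this
      exact Or.inr (Or.inr ⟨hc, rfl⟩)
  -- apply the forest hypothesis to T
  obtain ⟨A, hAT, hor⟩ := hΔ T hTsub ⟨H 0, hHT 0⟩
  have h01 : (0 : ZMod m) ≠ 1 := fun h => h1ne0 h.symm
  rcases hor with hsing | ⟨G, hGT, hGA, hbr⟩
  · have e0 : H 0 = A := Finset.mem_singleton.mp (hsing ▸ hHT 0)
    have e1 : H 1 = A := Finset.mem_singleton.mp (hsing ▸ hHT 1)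
    exact hHinj 0 1 h01 (e0.trans e1.symm)
  · rcases hTelim A hAT with ⟨a, rfl⟩ | ⟨a, hkept, rfl⟩
    · -- A = H a
      have hGL : G = H (a - 1) ∨ G = K a := by
        by_cases hd : P a
        · obtain ⟨y, hy1, hy2, hy3⟩ := hkeepR a hd
          have hBA : K a ≠ H a := (hHKne a a).symm
          have hyG : y ∈ G := (Finset.mem_inter.mp
            (hbr (K a) (hKT a hd) hBA (Finset.mem_inter.mpr ⟨hy2, hy1⟩))).1
          rcases locG hGT hyG hy2 with h | h | ⟨_, h⟩
          · exact absurd (h ▸ hyG) hy3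
          · exact absurd h hGA
          · exact Or.inr h
        · obtain ⟨x, hx1, hx2, hx3⟩ := hdropx a hd
          have hBA : H (a - 1) ≠ H a := hHinj _ _ (nz1 a)
          have hxG : x ∈ G := (Finset.mem_inter.mp
            (hbr (H (a - 1)) (hHT _) hBA (Finset.mem_inter.mpr ⟨hx1, hx2⟩))).1
          rcases locG hGT hxG hx3 with h | h | ⟨hpa, _⟩
          · exact Or.inl h
          · exact absurd h hGA
          · exact absurd hpa hd
      have hGR : G = H (a + 1) ∨ G = K (a + 1) := by
        by_cases hd : P (a + 1)
        · obtain ⟨x, hx1, hx2, hx3⟩ := hkeepL (a + 1) hd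
          rw [add_sub_cancel_right] at hx1
          have hBA : K (a + 1) ≠ H a := (hHKne a (a + 1)).symm
          have hxG : x ∈ G := (Finset.mem_inter.mp
            (hbr (K (a + 1)) (hKT _ hd) hBA (Finset.mem_inter.mpr ⟨hx2, hx1⟩))).1
          rcases locG hGT hxG hx2 with h | h | ⟨_, h⟩
          · rw [add_sub_cancel_right] at h
            exact absurd h hGA
          · exact absurd (h ▸ hxG) hx3
          · exact Or.inr h
        · obtain ⟨x, hx1, hx2, hx3⟩ := hdropx (a + 1) hd
          rw [add_sub_cancel_right] at hx1
          have hBA : H (a + 1) ≠ H a := hHinj _ _ (nz2 a).symm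
          have hxG : x ∈ G := (Finset.mem_inter.mp
            (hbr (H (a + 1)) (hHT _) hBA (Finset.mem_inter.mpr ⟨hx2, hx1⟩))).1
          rcases locG hGT hxG hx3 with h | h | ⟨hpa, _⟩
          · rw [add_sub_cancel_right] at h
            exact absurd h hGA
          · exact Or.inl h
          · exact absurd hpa hd
      rcases hGL with h | h <;> rcases hGR with h' | h'
      · exact hHinj _ _ (nz3 a) (h.symm.trans h')
      · exact hHKne _ _ (h.symm.trans h')
      · exact hHKne _ _ (h'.symm.trans h)
      · exact hKne a (a + 1) (nz2 a) (h.symm.trans h')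
    · -- A = K a, P a
      obtain ⟨x, hx1, hx2, hx3⟩ := hkeepL a hkept
      obtain ⟨y, hy1, hy2, hy3⟩ := hkeepR a hkept
      have hBA1 : H (a - 1) ≠ K a := hHKne _ _
      have hBA2 : H a ≠ K a := hHKne _ _
      have hxG : x ∈ G := (Finset.mem_inter.mp
        (hbr (H (a - 1)) (hHT _) hBA1 (Finset.mem_inter.mpr ⟨hx1, hx2⟩))).1
      have hyG : y ∈ G := (Finset.mem_inter.mp
        (hbr (H a) (hHT _) hBA2 (Finset.mem_inter.mpr ⟨hy1, hy2⟩))).1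
      have hG1 : G = H (a - 1) := by
        rcases locG hGT hxG hx2 with h | h | ⟨_, h⟩
        · exact h
        · exact absurd (h ▸ hxG) hx3
        · exact absurd h hGA
      have hG2 : G = H a := by
        rcases locG hGT hyG hy2 with h | h | ⟨_, h⟩
        · exact absurd (h ▸ hyG) hy3
        · exact h
        · exact absurd h hGA
      exact hHinj _ _ (nz1 a) (hG1.symm.trans hG2)

/-- In a simplicial forest, every matching of size at least two has a member `F`
which forms a gap with every member other than possibly one member `D`. -/
lemma exists_center (Δ : SimplicialComplex V) (hΔ : Δ.IsForest)
    (M : Finset (Finset V)) (hM : Δ.IsMatching M) (h2 : 2 ≤ M.card) :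
    ∃ F ∈ M, ∃ D ∈ M, D ≠ F ∧ ∀ K ∈ M, K ≠ F → K ≠ D → ¬ BadPair Δ F K := by
  classical
  by_contra hcon
  push_neg at hcon
  -- hcon : ∀ F ∈ M, ∀ D ∈ M, D ≠ F → ∃ K ∈ M, K ≠ F ∧ K ≠ D ∧ BadPair Δ F K
  have hbad_irrefl : ∀ F ∈ M, ¬ BadPair Δ F F := by
    intro F hF ⟨Hf, hHf, hsub, hne, _⟩
    rw [Finset.union_self] at hsub
    exact hne (facets_anti Δ hHf (hM.1 hF) hsub)
  obtain ⟨F₀, hF₀, D₀, hD₀, hFD₀⟩ := Finset.one_lt_card.mp (by omega : 1 < M.card)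
  obtain ⟨K₀, hK₀M, hK₀ne1, _, hK₀bad⟩ := hcon F₀ hF₀ D₀ hD₀ (Ne.symm hFD₀)
  have main : ∃ f : ℕ → Finset V, (∀ n, f n ∈ M) ∧ (∀ n, BadPair Δ (f n) (f (n + 1))) ∧
      (∀ n, f (n + 2) ≠ f n) := by
    have hstep : ∀ p : {q : (Finset V × Finset V) //
        q.1 ∈ M ∧ q.2 ∈ M ∧ q.1 ≠ q.2 ∧ BadPair Δ q.1 q.2},
        ∃ Knew, Knew ∈ M ∧ Knew ≠ p.val.2 ∧ Knew ≠ p.val.1 ∧ BadPair Δ p.val.2 Knew := by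
      intro p
      obtain ⟨Knew, h1, h2, h3, h4⟩ := hcon p.val.2 p.2.2.1 p.val.1 p.2.1 p.2.2.2.1
      exact ⟨Knew, h1, h2, h3, h4⟩
    choose nxt hn1 hn2 hn3 hn4 using hstep
    let g : ℕ → {q : (Finset V × Finset V) //
        q.1 ∈ M ∧ q.2 ∈ M ∧ q.1 ≠ q.2 ∧ BadPair Δ q.1 q.2} := fun n =>
      Nat.rec ⟨(F₀, K₀), hF₀, hK₀M, hK₀ne1.symm, hK₀bad⟩
        (fun _ prev => ⟨(prev.val.2, nxt prev),
          prev.2.2.1, hn1 prev, (hn2 prev).symm, hn4 prev⟩) n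
    have hgsucc : ∀ n, (g (n + 1)).val = ((g n).val.2, nxt (g n)) := fun n => rfl
    refine ⟨fun n => (g n).val.1, fun n => (g n).2.1, fun n => ?_, fun n => ?_⟩
    · show BadPair Δ (g n).val.1 (g (n + 1)).val.1
      have h1 : (g (n + 1)).val.1 = (g n).val.2 := by rw [hgsucc]
      rw [h1]
      exact (g n).2.2.2.2
    · show (g (n + 2)).val.1 ≠ (g n).val.1
      have h1 : (g (n + 2)).val.1 = (g (n + 1)).val.2 := by rw [hgsucc (n + 1)]
      have h2 : (g (n + 1)).val.2 = nxt (g n) := by rw [hgsucc n]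
      rw [h1, h2]
      exact hn3 (g n)
  obtain ⟨f, hfM, hfBad, hfne2⟩ := main
  have hconsec : ∀ n, f n ≠ f (n + 1) := by
    intro n h
    exact hbad_irrefl (f n) (hfM n) (h ▸ hfBad n)
  have hrep : ∃ b, ∃ a, a < b ∧ f a = f b := by
    obtain ⟨a, _, b, _, hne, heq⟩ :=
      Finset.exists_ne_map_eq_of_card_lt_of_maps_to
        (s := Finset.range (M.card + 1)) (t := M) (by simp) (fun n _ => hfM n)
    rcases hne.lt_or_gt with h | h
    · exact ⟨b, a, h, heq⟩
    · exact ⟨a, b, h, heq.symm⟩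
  let j := Nat.find hrep
  obtain ⟨i, hij, hfeq⟩ : ∃ a, a < j ∧ f a = f j := Nat.find_spec hrep
  have hmin : ∀ b, b < j → ¬ ∃ a, a < b ∧ f a = f b := fun b hb => Nat.find_min hrep hb
  have hdist : ∀ a b, a < b → b < j → f a ≠ f b := by
    intro a b hab hbj heq
    exact hmin b hbj ⟨a, hab, heq⟩
  set m := j - i with hm_def
  have hijm : i + m = j := by omega
  have hm3 : 3 ≤ m := by
    by_contra hlt
    push_neg at hlt
    have h12 : m = 1 ∨ m = 2 := by omega
    rcases h12 with h | h
    · exact hconsec i (by rw [show i + 1 = j by omega]; exact hfeq)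
    · exact hfne2 i (by rw [show i + 2 = j by omega]; exact hfeq.symm)
  haveI : NeZero m := ⟨by omega⟩
  haveI : Fact (1 < m) := ⟨by omega⟩
  set K : ZMod m → Finset V := fun z => f (i + z.val) with hK_def
  have hKM : ∀ z, K z ∈ M := fun z => hfM _
  have hvlt : ∀ z : ZMod m, z.val < m := fun z => ZMod.val_lt z
  have hKinj : ∀ z w : ZMod m, z ≠ w → K z ≠ K w := by
    intro z w hzw heq
    have hv : z.val ≠ w.val := by
      intro h
      apply hzw
      have h1 : ((z.val : ℕ) : ZMod m) = ((w.val : ℕ) : ZMod m) := by rw [h]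
      rwa [ZMod.natCast_val, ZMod.natCast_val, ZMod.cast_id, ZMod.cast_id] at h1
    rcases hv.lt_or_gt with h | h
    · exact hdist (i + z.val) (i + w.val) (by omega) (by have := hvlt w; omega) heq
    · exact hdist (i + w.val) (i + z.val) (by omega) (by have := hvlt z; omega) heq.symm
  have hKdisj : ∀ z w : ZMod m, z ≠ w → K z ∩ K w = ∅ := fun z w hzw =>
    hM.2 _ (hKM z) _ (hKM w) (hKinj z w hzw)
  have hBadK : ∀ z : ZMod m, BadPair Δ (K z) (K (z + 1)) := by
    intro z
    have hval : (z + 1).val = (z.val + 1) % m := by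
      rw [ZMod.val_add, ZMod.val_one]
    show BadPair Δ (f (i + z.val)) (f (i + (z + 1).val))
    by_cases hc : z.val + 1 < m
    · rw [hval, Nat.mod_eq_of_lt hc, show i + (z.val + 1) = (i + z.val) + 1 from by omega]
      exact hfBad (i + z.val)
    · have hz : z.val + 1 = m := by have := hvlt z; omega
      rw [hval, hz, Nat.mod_self, Nat.add_zero, hfeq,
        show j = (i + z.val) + 1 from by omega]
      exact hfBad (i + z.val)
  choose HH hHH1 hHH2 hHH3 hHH4 using hBadK
  exact forest_no_cycle Δ hΔ hm3 K HH (fun z => hM.1 (hKM z)) hHH1 hKdisj hHH2 hHH3 hHH4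

end ForestAux

/-- For a simplicial forest, `ν(Δ) ≤ ν₀(Δ) + 1`. -/
theorem matchingNumber_le_restrictedMatchingNumber_add_one
    {V : Type} [DecidableEq V] (Δ : SimplicialComplex V) (hΔ : Δ.IsForest) :
    Δ.matchingNumber ≤ Δ.restrictedMatchingNumber + 1 := by
  classical
  have hbdd : BddAbove {r : ℕ | ∃ M : Finset (Finset V), Δ.IsMatching M ∧ M.card = r} := by
    refine ⟨Δ.facets.card, ?_⟩
    rintro r ⟨M, hM, rfl⟩
    exact Finset.card_le_card hM.1
  have hbdd₀ : BddAbove {r : ℕ | ∃ M : Finset (Finset V),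
      Δ.IsRestrictedMatching M ∧ M.card = r} := by
    refine ⟨Δ.facets.card, ?_⟩
    rintro r ⟨M, hM, rfl⟩
    exact Finset.card_le_card hM.1.1
  have hne : {r : ℕ | ∃ M : Finset (Finset V), Δ.IsMatching M ∧ M.card = r}.Nonempty := by
    refine ⟨0, ∅, ⟨Finset.empty_subset _, ?_⟩, Finset.card_empty⟩
    intro F hF
    exact absurd hF (Finset.notMem_empty F)
  have hmem : ∃ M : Finset (Finset V), Δ.IsMatching M ∧ M.card = Δ.matchingNumber :=
    Nat.sSup_mem hne hbdd
  obtain ⟨M, hM, hcard⟩ := hmem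
  by_cases hle : Δ.matchingNumber ≤ 1
  · omega
  · have h2 : 2 ≤ M.card := by omega
    obtain ⟨F, hF, D, hD, hDF, hgap⟩ := exists_center Δ hΔ M hM h2
    have hrestr : Δ.IsRestrictedMatching (M.erase D) := by
      constructor
      · constructor
        · exact (Finset.erase_subset _ _).trans hM.1
        · intro A hA B hB hAB
          exact hM.2 A (Finset.mem_of_mem_erase hA) B (Finset.mem_of_mem_erase hB) hAB
      · refine ⟨F, Finset.mem_erase.mpr ⟨fun h => hDF h.symm, hF⟩, ?_⟩
        intro G hG hGF
        have hGM : G ∈ M := Finset.mem_of_mem_erase hG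
        have hGD : G ≠ D := (Finset.mem_erase.mp hG).1
        refine ⟨hM.1 hF, hM.1 hGM, hM.2 F hF G hGM (fun h => hGF h.symm), ?_⟩
        intro Hf hHf hHsub
        by_contra hboth
        push_neg at hboth
        exact hgap G hGM hGF hGD ⟨Hf, hHf, hHsub, hboth.1, hboth.2⟩
    have hmem₀ : M.card - 1 ∈ {r : ℕ | ∃ M : Finset (Finset V),
        Δ.IsRestrictedMatching M ∧ M.card = r} :=
      ⟨M.erase D, hrestr, Finset.card_erase_of_mem hD⟩
    have hle₀ : M.card - 1 ≤ Δ.restrictedMatchingNumber := le_csSup hbdd₀ hmem₀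
    omega

end
end

section
/- Let Δ be a simplicial forest with the intersection property whose facets have cardinality at least 2 (i.e., dim Δ ≥ 1). Then ν(Δ) ≤ 2. -/
noncomputable section

open Finset MvPolynomial

section Aux

variable {V : Type} [DecidableEq V]

lemma aux_facet_mem_faces {Δ : SimplicialComplex V} {F : Finset V}
    (h : F ∈ Δ.facets) : F ∈ Δ.faces := by
  classical
  unfold SimplicialComplex.facets at h
  exact (Finset.mem_filter.mp h).1

lemma aux_facet_eq {Δ : SimplicialComplex V} {F G : Finset V}
    (hF : F ∈ Δ.facets) (hG : G ∈ Δ.facets) (h : F ⊆ G) : F = G := by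
  classical
  have hG' := aux_facet_mem_faces hG
  unfold SimplicialComplex.facets at hF
  exact (Finset.mem_filter.mp hF).2 G hG' h

lemma aux_not_both {X Y : Finset V} (h : X ∩ Y = ∅) {x : V}
    (hx : x ∈ X) (hy : x ∈ Y) : False :=
  Finset.notMem_empty x (h ▸ Finset.mem_inter.mpr ⟨hx, hy⟩)

lemma aux_comm {X Y : Finset V} (h : X ∩ Y = ∅) : Y ∩ X = ∅ := by
  rwa [Finset.inter_comm]

lemma aux_empty {X Y Z W : Finset V} (h : X ⊆ Y ∪ Z)
    (h1 : Y ∩ W = ∅) (h2 : Z ∩ W = ∅) : X ∩ W = ∅ := by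
  ext x
  simp only [Finset.mem_inter, Finset.notMem_empty, iff_false, not_and]
  intro hx hw
  rcases Finset.mem_union.mp (h hx) with hy | hz
  · exact aux_not_both h1 hy hw
  · exact aux_not_both h2 hz hw

/-- If `T` is a nonempty set of facets in which every member is covered by the
union of two other members, then the forest property fails. -/
lemma aux_no_leaf {Δ : SimplicialComplex V} (hΔ : Δ.IsForest)
    (T : Finset (Finset V)) (hT : T ⊆ Δ.facets) (hne : T.Nonempty)
    (hcov : ∀ A ∈ T, ∃ H1 ∈ T, ∃ H2 ∈ T, H1 ≠ A ∧ H2 ≠ A ∧ A ⊆ H1 ∪ H2) :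
    False := by
  obtain ⟨F, hFT, hleaf⟩ := hΔ T hT hne
  obtain ⟨H1, hH1, H2, hH2, hne1, hne2, hsub⟩ := hcov F hFT
  rcases hleaf with h | ⟨G, hG, hGF, hdom⟩
  · rw [h] at hH1
    exact hne1 (Finset.mem_singleton.mp hH1)
  · have hFG : F ⊆ G := by
      intro x hx
      rcases Finset.mem_union.mp (hsub hx) with h1 | h1
      · exact (Finset.mem_inter.mp (hdom H1 hH1 hne1 (Finset.mem_inter.mpr ⟨h1, hx⟩))).1
      · exact (Finset.mem_inter.mp (hdom H2 hH2 hne2 (Finset.mem_inter.mpr ⟨h1, hx⟩))).1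
    exact hGF (aux_facet_eq (hT hFT) (hT hG) hFG).symm

/-- Two distinct subsets of cardinality one less cover the whole set. -/
lemma aux_union_eq {S A B : Finset V} (hA : A ⊆ S) (hB : B ⊆ S)
    (hcA : A.card + 1 = S.card) (hcB : B.card + 1 = S.card) (hAB : A ≠ B) :
    S ⊆ A ∪ B := by
  have hABc : A.card = B.card := by omega
  have hinter : (A ∩ B).card < A.card := by
    rcases lt_or_eq_of_le (Finset.card_le_card (Finset.inter_subset_left : A ∩ B ⊆ A))
      with h | h
    · exact h
    · exfalso
      apply hAB
      have h1 : A ∩ B = A :=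
        Finset.eq_of_subset_of_card_le Finset.inter_subset_left (le_of_eq h.symm)
      exact Finset.eq_of_subset_of_card_le (Finset.inter_eq_left.mp h1) (le_of_eq hABc.symm)
  have hc := Finset.card_union_add_card_inter A B
  have hle : S.card ≤ (A ∪ B).card := by omega
  exact le_of_eq (Finset.eq_of_subset_of_card_le (Finset.union_subset hA hB) hle).symm

/-- Structure of a proper chain of length `t` between two disjoint facets. -/
lemma aux_chain {Δ : SimplicialComplex V} {t : ℕ} (ht : 1 ≤ t)
    (hpure : ∀ H ∈ Δ.facets, H.card = t)
    {F G : Finset V} (hdisj : F ∩ G = ∅)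
    {c : ℕ → Finset V} (h0 : c 0 = F) (hct : c t = G)
    (hfac : ∀ i ≤ t, c i ∈ Δ.facets)
    (hstep : ∀ i < t, (c i ∩ c (i + 1)).card = (c (i + 1)).card - 1) :
    (∀ i ≤ t, (c i ∩ F).card = t - i) ∧ (∀ i ≤ t, (c i ∩ G).card = i) ∧
    (∀ i ≤ t, c i ⊆ F ∪ G) ∧ (∀ i < t, c i \ c (i + 1) ⊆ F) ∧
    (∀ i < t, c (i + 1) \ c i ⊆ G) := by
  have hcard : ∀ i ≤ t, (c i).card = t := fun i hi => hpure _ (hfac i hi)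
  have hFc : F.card = t := by rw [← h0]; exact hcard 0 (Nat.zero_le t)
  have hGc : G.card = t := by rw [← hct]; exact hcard t le_rfl
  have hstep' : ∀ i < t, (c i ∩ c (i + 1)).card = t - 1 := by
    intro i hi
    rw [hstep i hi, hcard (i + 1) hi]
  have hdiffF : ∀ i < t, (c i \ c (i + 1)).card = 1 := by
    intro i hi
    have h1 := Finset.card_inter_add_card_sdiff (c i) (c (i + 1))
    have h2 := hstep' i hi
    have h3 := hcard i (le_of_lt hi)
    omega
  have hdiffG : ∀ i < t, (c (i + 1) \ c i).card = 1 := by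
    intro i hi
    have h1 := Finset.card_inter_add_card_sdiff (c (i + 1)) (c i)
    have h2 := hstep' i hi
    have h3 := hcard (i + 1) hi
    rw [Finset.inter_comm] at h1
    omega
  -- lower bound on intersection with F
  have hA : ∀ i, i ≤ t → t - i ≤ (c i ∩ F).card := by
    intro i
    induction i with
    | zero =>
      intro _
      rw [h0, Finset.inter_self, hFc]
      omega
    | succ i ih =>
      intro hi
      have hi' : i < t := hi
      have hsub : c i ∩ F ⊆ (c (i + 1) ∩ F) ∪ (c i \ c (i + 1)) := by
        intro x hx
        rcases Finset.mem_inter.mp hx with ⟨h1, h2⟩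
        by_cases hx2 : x ∈ c (i + 1)
        · exact Finset.mem_union_left _ (Finset.mem_inter.mpr ⟨hx2, h2⟩)
        · exact Finset.mem_union_right _ (Finset.mem_sdiff.mpr ⟨h1, hx2⟩)
      have h4 := (Finset.card_le_card hsub).trans (Finset.card_union_le _ _)
      have h5 := hdiffF i hi'
      have h6 := ih (le_of_lt hi')
      omega
  -- lower bound on intersection with G
  have hB' : ∀ j, j ≤ t → t - j ≤ (c (t - j) ∩ G).card := by
    intro j
    induction j with
    | zero =>
      intro _
      rw [Nat.sub_zero, hct, Finset.inter_self, hGc]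
    | succ j ih =>
      intro hj
      have h1 : t - j = (t - (j + 1)) + 1 := by omega
      have hlt : t - (j + 1) < t := by omega
      have hsub : c (t - j) ∩ G ⊆ (c (t - (j + 1)) ∩ G) ∪ (c (t - j) \ c (t - (j + 1))) := by
        intro x hx
        rcases Finset.mem_inter.mp hx with ⟨hx1, hx2⟩
        by_cases hx3 : x ∈ c (t - (j + 1))
        · exact Finset.mem_union_left _ (Finset.mem_inter.mpr ⟨hx3, hx2⟩)
        · exact Finset.mem_union_right _ (Finset.mem_sdiff.mpr ⟨hx1, hx3⟩)
      have h4 := (Finset.card_le_card hsub).trans (Finset.card_union_le _ _)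
      have h5 : (c (t - j) \ c (t - (j + 1))).card = 1 := by
        rw [h1]
        exact hdiffG _ (by omega)
      have h6 := ih (le_of_lt (Nat.lt_of_succ_le hj))
      omega
  have hB : ∀ i, i ≤ t → i ≤ (c i ∩ G).card := by
    intro i hi
    have h1 := hB' (t - i) (by omega)
    have h2 : t - (t - i) = i := by omega
    rw [h2] at h1
    omega
  -- equalities
  have hkey : ∀ i ≤ t, (c i ∩ F).card = t - i ∧ (c i ∩ G).card = i ∧ c i ⊆ F ∪ G := by
    intro i hi
    have hdisj2 : Disjoint (c i ∩ F) (c i ∩ G) := by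
      rw [Finset.disjoint_left]
      intro x hx hx'
      exact aux_not_both hdisj (Finset.mem_inter.mp hx).2 (Finset.mem_inter.mp hx').2
    have hun : (c i ∩ F) ∪ (c i ∩ G) = c i ∩ (F ∪ G) :=
      (Finset.inter_union_distrib_left _ _ _).symm
    have hsum : (c i ∩ F).card + (c i ∩ G).card = (c i ∩ (F ∪ G)).card := by
      rw [← hun, Finset.card_union_of_disjoint hdisj2]
    have hle : (c i ∩ (F ∪ G)).card ≤ t := by
      have h9 : (c i ∩ (F ∪ G)).card ≤ (c i).card :=
        Finset.card_le_card Finset.inter_subset_left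
      rw [hcard i hi] at h9
      exact h9
    have hAi := hA i hi
    have hBi := hB i hi
    refine ⟨by omega, by omega, ?_⟩
    have heq : (c i ∩ (F ∪ G)).card = t := by omega
    have h8 : c i ∩ (F ∪ G) = c i := Finset.eq_of_subset_of_card_le
      (Finset.inter_subset_left) (le_of_eq (by rw [hcard i hi, heq]))
    exact Finset.inter_eq_left.mp h8
  refine ⟨fun i hi => (hkey i hi).1, fun i hi => (hkey i hi).2.1,
    fun i hi => (hkey i hi).2.2, ?_, ?_⟩
  · -- c i \ c (i+1) ⊆ F
    intro i hi x hx
    rcases Finset.mem_sdiff.mp hx with ⟨hx1, hx2⟩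
    rcases Finset.mem_union.mp ((hkey i (le_of_lt hi)).2.2 hx1) with hxF | hxG
    · exact hxF
    · exfalso
      have hsub : c i ∩ F ⊆ c (i + 1) ∩ F := by
        intro z hz
        rcases Finset.mem_inter.mp hz with ⟨hz1, hz2⟩
        refine Finset.mem_inter.mpr ⟨?_, hz2⟩
        by_contra hz3
        have hzx : z = x := by
          have h1 : z ∈ c i \ c (i + 1) := Finset.mem_sdiff.mpr ⟨hz1, hz3⟩
          have := Finset.card_le_one.mp (le_of_eq (hdiffF i hi)) z h1 x hx
          exact this
        exact aux_not_both hdisj hz2 (hzx ▸ hxG)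
      have h1 := Finset.card_le_card hsub
      rw [(hkey i (le_of_lt hi)).1, (hkey (i + 1) hi).1] at h1
      omega
  · -- c (i+1) \ c i ⊆ G
    intro i hi x hx
    rcases Finset.mem_sdiff.mp hx with ⟨hx1, hx2⟩
    rcases Finset.mem_union.mp ((hkey (i + 1) hi).2.2 hx1) with hxF | hxG
    · exfalso
      have hsub : c (i + 1) ∩ G ⊆ c i ∩ G := by
        intro z hz
        rcases Finset.mem_inter.mp hz with ⟨hz1, hz2⟩
        refine Finset.mem_inter.mpr ⟨?_, hz2⟩
        by_contra hz3
        have hzx : z = x := by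
          have h1 : z ∈ c (i + 1) \ c i := Finset.mem_sdiff.mpr ⟨hz1, hz3⟩
          exact Finset.card_le_one.mp (le_of_eq (hdiffG i hi)) z h1 x hx
        exact aux_not_both hdisj (hzx ▸ hxF) hz2
      have h1 := Finset.card_le_card hsub
      rw [(hkey i (le_of_lt hi)).2.1, (hkey (i + 1) hi).2.1] at h1
      omega
    · exact hxG

/-- The covering property for the interior facets of one of the three chains. -/
lemma aux_cover_chain {t : ℕ} (ht : 2 ≤ t)
    {F1 F2 : Finset V} (h12 : F1 ∩ F2 = ∅)
    (hF1c : F1.card = t) (hF2c : F2.card = t)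
    {cP : ℕ → Finset V}
    (hPF : ∀ i ≤ t, (cP i ∩ F1).card = t - i)
    (hPG : ∀ i ≤ t, (cP i ∩ F2).card = i)
    (hPsub : ∀ i ≤ t, cP i ⊆ F1 ∪ F2)
    (hPd : ∀ i < t, cP i \ cP (i + 1) ⊆ F1)
    (hPe : ∀ i < t, cP (i + 1) \ cP i ⊆ F2)
    {T : Finset (Finset V)} {A1 A2 : Finset V}
    (hA1 : A1 ∩ F2 = ∅) (hA2 : A2 ∩ F1 = ∅)
    (hA1T : A1 ∈ T) (hA2T : A2 ∈ T)
    (hF1T : cP 1 ∩ F1 ≠ A1 ∩ F1 → F1 ∈ T)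
    (hF2T : cP (t - 1) ∩ F2 ≠ A2 ∩ F2 → F2 ∈ T)
    (hTP : ∀ i, 1 ≤ i → i ≤ t - 1 → cP i ∈ T) :
    ∀ i, 1 ≤ i → i ≤ t - 1 →
      ∃ H1 ∈ T, ∃ H2 ∈ T, H1 ≠ cP i ∧ H2 ≠ cP i ∧ cP i ⊆ H1 ∪ H2 := by
  intro i hi1 hi2
  have hit : i ≤ t := by omega
  -- choose H1 covering the F1-part
  have hH1 : ∃ H1 ∈ T, H1 ≠ cP i ∧ cP i ∩ F1 ⊆ H1 := by
    obtain ⟨j, rfl⟩ : ∃ j, i = j + 1 := ⟨i - 1, by omega⟩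
    rcases Nat.eq_zero_or_pos j with hj0 | hj1
    · subst hj0
      by_cases hb : cP 1 ∩ F1 = A1 ∩ F1
      · refine ⟨A1, hA1T, ?_, ?_⟩
        · intro he
          have h1 := hPG 1 (by omega)
          rw [← he, hA1] at h1
          simp at h1
        · rw [hb]
          exact Finset.inter_subset_left
      · refine ⟨F1, hF1T hb, ?_, Finset.inter_subset_right⟩
        intro he
        have h1 := hPF 1 (by omega)
        rw [← he, Finset.inter_self, hF1c] at h1
        omega
    · refine ⟨cP j, hTP j hj1 (by omega), ?_, ?_⟩
      · intro he
        have h1 := hPF j (by omega)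
        have h2 := hPF (j + 1) hit
        rw [he] at h1
        omega
      · intro x hx
        rcases Finset.mem_inter.mp hx with ⟨hx1, hx2⟩
        by_contra hx3
        exact aux_not_both h12 hx2 (hPe j (by omega) (Finset.mem_sdiff.mpr ⟨hx1, hx3⟩))
  -- choose H2 covering the F2-part
  have hH2 : ∃ H2 ∈ T, H2 ≠ cP i ∧ cP i ∩ F2 ⊆ H2 := by
    by_cases hilt : i + 1 ≤ t - 1
    · refine ⟨cP (i + 1), hTP (i + 1) (by omega) hilt, ?_, ?_⟩
      · intro he
        have h1 := hPF i hit
        have h2 := hPF (i + 1) (by omega)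
        rw [he] at h2
        omega
      · intro x hx
        rcases Finset.mem_inter.mp hx with ⟨hx1, hx2⟩
        by_contra hx3
        exact aux_not_both h12 (hPd i (by omega) (Finset.mem_sdiff.mpr ⟨hx1, hx3⟩)) hx2
    · have hieq : i = t - 1 := by omega
      subst hieq
      by_cases hb : cP (t - 1) ∩ F2 = A2 ∩ F2
      · refine ⟨A2, hA2T, ?_, ?_⟩
        · intro he
          have h1 := hPF (t - 1) (by omega)
          rw [← he, hA2] at h1
          simp at h1
          omega
        · rw [hb]
          exact Finset.inter_subset_left
      · refine ⟨F2, hF2T hb, ?_, Finset.inter_subset_right⟩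
        intro he
        have h1 := hPG (t - 1) (by omega)
        rw [← he, Finset.inter_self, hF2c] at h1
        omega
  obtain ⟨H1, hH1T, hH1ne, hH1s⟩ := hH1
  obtain ⟨H2, hH2T, hH2ne, hH2s⟩ := hH2
  refine ⟨H1, hH1T, H2, hH2T, hH1ne, hH2ne, ?_⟩
  intro x hx
  rcases Finset.mem_union.mp (hPsub i hit hx) with hxF | hxG
  · exact Finset.mem_union_left _ (hH1s (Finset.mem_inter.mpr ⟨hx, hxF⟩))
  · exact Finset.mem_union_right _ (hH2s (Finset.mem_inter.mpr ⟨hx, hxG⟩))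

/-- The covering property for a "good" endpoint. -/
lemma aux_cover_endpoint {t : ℕ} (ht : 2 ≤ t) {F1 : Finset V} (hF1c : F1.card = t)
    {B1 B2 : Finset V} (hB1 : (B1 ∩ F1).card = t - 1) (hB2 : (B2 ∩ F1).card = t - 1)
    (hne : B1 ∩ F1 ≠ B2 ∩ F1) :
    B1 ≠ F1 ∧ B2 ≠ F1 ∧ F1 ⊆ B1 ∪ B2 := by
  have h1 : B1 ≠ F1 := by
    intro he
    rw [he, Finset.inter_self, hF1c] at hB1
    omega
  have h2 : B2 ≠ F1 := by
    intro he
    rw [he, Finset.inter_self, hF1c] at hB2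
    omega
  refine ⟨h1, h2, ?_⟩
  have := aux_union_eq (S := F1) (A := B1 ∩ F1) (B := B2 ∩ F1)
    Finset.inter_subset_right Finset.inter_subset_right
    (by omega) (by omega) hne
  intro x hx
  rcases Finset.mem_union.mp (this hx) with h | h
  · exact Finset.mem_union_left _ (Finset.mem_inter.mp h).1
  · exact Finset.mem_union_right _ (Finset.mem_inter.mp h).1

end Aux

/-- A simplicial forest with the intersection property whose
facets have cardinality `t ≥ 2` has matching number at most `2`. -/
theorem matchingNumber_le_two_of_intersectionProperty
    {V : Type} [DecidableEq V] (Δ : SimplicialComplex V) (hΔ : Δ.IsForest)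
    (t : ℕ) (ht : 2 ≤ t) (hip : Δ.HasIntersectionProperty t) :
    Δ.matchingNumber ≤ 2 := by
  classical
  have hpure := hip.1
  -- chains exist between disjoint facets
  have exchain : ∀ F ∈ Δ.facets, ∀ G ∈ Δ.facets, F ∩ G = ∅ → Δ.ProperChain F G t := by
    intro F hF G hG hFG
    have hne : {n | Δ.ProperChain F G n}.Nonempty := hip.2.1 F hF G hG
    have hd : Δ.dist F G = t := by
      refine hip.2.2 F hF G hG t (by omega) le_rfl ?_
      rw [hFG, Finset.card_empty]
      omega
    have hmem := Nat.sInf_mem hne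
    have heq : sInf {n | Δ.ProperChain F G n} = t := hd
    rwa [heq] at hmem
  have key : ∀ M : Finset (Finset V), Δ.IsMatching M → M.card ≤ 2 := by
    intro M hM
    by_contra hc
    push_neg at hc
    -- extract three distinct facets
    have h1 : 0 < M.card := by omega
    obtain ⟨F1, hF1M⟩ := Finset.card_pos.mp h1
    have h2 : 0 < (M.erase F1).card := by
      rw [Finset.card_erase_of_mem hF1M]; omega
    obtain ⟨F2, hF2e⟩ := Finset.card_pos.mp h2
    have h3 : 0 < ((M.erase F1).erase F2).card := by
      rw [Finset.card_erase_of_mem hF2e, Finset.card_erase_of_mem hF1M]; omega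
    obtain ⟨F3, hF3e⟩ := Finset.card_pos.mp h3
    have hF2M : F2 ∈ M := Finset.mem_of_mem_erase hF2e
    have hF3M : F3 ∈ M := Finset.mem_of_mem_erase (Finset.mem_of_mem_erase hF3e)
    have n21 : F2 ≠ F1 := Finset.ne_of_mem_erase hF2e
    have n31 : F3 ≠ F1 := Finset.ne_of_mem_erase (Finset.mem_of_mem_erase hF3e)
    have n32 : F3 ≠ F2 := Finset.ne_of_mem_erase hF3e
    have hf1 : F1 ∈ Δ.facets := hM.1 hF1M
    have hf2 : F2 ∈ Δ.facets := hM.1 hF2M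
    have hf3 : F3 ∈ Δ.facets := hM.1 hF3M
    have h12 : F1 ∩ F2 = ∅ := hM.2 F1 hF1M F2 hF2M n21.symm
    have h23 : F2 ∩ F3 = ∅ := hM.2 F2 hF2M F3 hF3M n32.symm
    have h13 : F1 ∩ F3 = ∅ := hM.2 F1 hF1M F3 hF3M n31.symm
    have hF1c : F1.card = t := hpure F1 hf1
    have hF2c : F2.card = t := hpure F2 hf2
    have hF3c : F3.card = t := hpure F3 hf3
    have ht1 : (1 : ℕ) ≤ t := by omega
    -- the three chains
    obtain ⟨cP, hP0, hPt, hPfac, hPstep⟩ := exchain F1 hf1 F2 hf2 h12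
    obtain ⟨cQ, hQ0, hQt, hQfac, hQstep⟩ := exchain F2 hf2 F3 hf3 h23
    obtain ⟨cR, hR0, hRt, hRfac, hRstep⟩ := exchain F3 hf3 F1 hf1 (aux_comm h13)
    obtain ⟨hPF, hPG, hPsub, hPd, hPe⟩ := aux_chain ht1 hpure h12 hP0 hPt hPfac hPstep
    obtain ⟨hQF, hQG, hQsub, hQd, hQe⟩ := aux_chain ht1 hpure h23 hQ0 hQt hQfac hQstep
    obtain ⟨hRF, hRG, hRsub, hRd, hRe⟩ :=
      aux_chain ht1 hpure (aux_comm h13) hR0 hRt hRfac hRstep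
    -- the subcomplex T
    set T : Finset (Finset V) :=
      ((Finset.Icc 1 (t - 1)).image cP) ∪ ((Finset.Icc 1 (t - 1)).image cQ) ∪
      ((Finset.Icc 1 (t - 1)).image cR) ∪
      (if cP 1 ∩ F1 = cR (t - 1) ∩ F1 then ∅ else {F1}) ∪
      (if cQ 1 ∩ F2 = cP (t - 1) ∩ F2 then ∅ else {F2}) ∪
      (if cR 1 ∩ F3 = cQ (t - 1) ∩ F3 then ∅ else {F3}) with hTdef
    have hPmem : ∀ i, 1 ≤ i → i ≤ t - 1 → cP i ∈ T := by
      intro i hi1 hi2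
      simp only [hTdef, Finset.mem_union]
      exact Or.inl (Or.inl (Or.inl (Or.inl (Or.inl
        (Finset.mem_image_of_mem cP (Finset.mem_Icc.mpr ⟨hi1, hi2⟩))))))
    have hQmem : ∀ i, 1 ≤ i → i ≤ t - 1 → cQ i ∈ T := by
      intro i hi1 hi2
      simp only [hTdef, Finset.mem_union]
      exact Or.inl (Or.inl (Or.inl (Or.inl (Or.inr
        (Finset.mem_image_of_mem cQ (Finset.mem_Icc.mpr ⟨hi1, hi2⟩))))))
    have hRmem : ∀ i, 1 ≤ i → i ≤ t - 1 → cR i ∈ T := by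
      intro i hi1 hi2
      simp only [hTdef, Finset.mem_union]
      exact Or.inl (Or.inl (Or.inl (Or.inr
        (Finset.mem_image_of_mem cR (Finset.mem_Icc.mpr ⟨hi1, hi2⟩)))))
    have hF1mem : cP 1 ∩ F1 ≠ cR (t - 1) ∩ F1 → F1 ∈ T := by
      intro hb
      simp only [hTdef, Finset.mem_union]
      exact Or.inl (Or.inl (Or.inr (by rw [if_neg hb]; exact Finset.mem_singleton_self F1)))
    have hF2mem : cQ 1 ∩ F2 ≠ cP (t - 1) ∩ F2 → F2 ∈ T := by
      intro hb
      simp only [hTdef, Finset.mem_union]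
      exact Or.inl (Or.inr (by rw [if_neg hb]; exact Finset.mem_singleton_self F2))
    have hF3mem : cR 1 ∩ F3 ≠ cQ (t - 1) ∩ F3 → F3 ∈ T := by
      intro hb
      simp only [hTdef, Finset.mem_union]
      exact Or.inr (by rw [if_neg hb]; exact Finset.mem_singleton_self F3)
    have hTsub : T ⊆ Δ.facets := by
      intro A hA
      simp only [hTdef, Finset.mem_union] at hA
      rcases hA with ((((hA | hA) | hA) | hA) | hA) | hA
      · obtain ⟨i, hi, rfl⟩ := Finset.mem_image.mp hA
        exact hPfac i (by rw [Finset.mem_Icc] at hi; omega)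
      · obtain ⟨i, hi, rfl⟩ := Finset.mem_image.mp hA
        exact hQfac i (by rw [Finset.mem_Icc] at hi; omega)
      · obtain ⟨i, hi, rfl⟩ := Finset.mem_image.mp hA
        exact hRfac i (by rw [Finset.mem_Icc] at hi; omega)
      · split_ifs at hA with hb
        · exact absurd hA (Finset.notMem_empty A)
        · rw [Finset.mem_singleton.mp hA]; exact hf1
      · split_ifs at hA with hb
        · exact absurd hA (Finset.notMem_empty A)
        · rw [Finset.mem_singleton.mp hA]; exact hf2
      · split_ifs at hA with hb
        · exact absurd hA (Finset.notMem_empty A)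
        · rw [Finset.mem_singleton.mp hA]; exact hf3
    have hTne : T.Nonempty := ⟨cP 1, hPmem 1 le_rfl (by omega)⟩
    -- emptiness facts for the substitutes
    have hRP : cR (t - 1) ∩ F2 = ∅ :=
      aux_empty (hRsub (t - 1) (by omega)) (aux_comm h23) h12
    have hQP : cQ 1 ∩ F1 = ∅ :=
      aux_empty (hQsub 1 ht1) (aux_comm h12) (aux_comm h13)
    have hPQ : cP (t - 1) ∩ F3 = ∅ :=
      aux_empty (hPsub (t - 1) (by omega)) h13 h23
    have hRQ : cR 1 ∩ F2 = ∅ :=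
      aux_empty (hRsub 1 ht1) (aux_comm h23) h12
    have hQR : cQ (t - 1) ∩ F1 = ∅ :=
      aux_empty (hQsub (t - 1) (by omega)) (aux_comm h12) (aux_comm h13)
    have hPR : cP 1 ∩ F3 = ∅ :=
      aux_empty (hPsub 1 ht1) h13 h23
    -- covering property
    have hcov : ∀ A ∈ T, ∃ H1 ∈ T, ∃ H2 ∈ T, H1 ≠ A ∧ H2 ≠ A ∧ A ⊆ H1 ∪ H2 := by
      intro A hA
      simp only [hTdef, Finset.mem_union] at hA
      rcases hA with ((((hA | hA) | hA) | hA) | hA) | hA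
      · obtain ⟨i, hi, rfl⟩ := Finset.mem_image.mp hA
        rw [Finset.mem_Icc] at hi
        exact aux_cover_chain ht h12 hF1c hF2c hPF hPG hPsub hPd hPe
          hRP hQP (hRmem (t - 1) (by omega) le_rfl) (hQmem 1 le_rfl (by omega))
          hF1mem (fun hb => hF2mem (fun he => hb he.symm)) hPmem i hi.1 hi.2
      · obtain ⟨i, hi, rfl⟩ := Finset.mem_image.mp hA
        rw [Finset.mem_Icc] at hi
        exact aux_cover_chain ht h23 hF2c hF3c hQF hQG hQsub hQd hQe
          hPQ hRQ (hPmem (t - 1) (by omega) le_rfl) (hRmem 1 le_rfl (by omega))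
          hF2mem (fun hb => hF3mem (fun he => hb he.symm)) hQmem i hi.1 hi.2
      · obtain ⟨i, hi, rfl⟩ := Finset.mem_image.mp hA
        rw [Finset.mem_Icc] at hi
        exact aux_cover_chain ht (aux_comm h13) hF3c hF1c hRF hRG hRsub hRd hRe
          hQR hPR (hQmem (t - 1) (by omega) le_rfl) (hPmem 1 le_rfl (by omega))
          hF3mem (fun hb => hF1mem (fun he => hb he.symm)) hRmem i hi.1 hi.2
      · split_ifs at hA with hb
        · exact absurd hA (Finset.notMem_empty A)
        · obtain rfl := Finset.mem_singleton.mp hA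
          obtain ⟨hne1, hne2, hcov1⟩ := aux_cover_endpoint ht hF1c
            (hPF 1 ht1) (hRG (t - 1) (by omega)) hb
          exact ⟨cP 1, hPmem 1 le_rfl (by omega), cR (t - 1),
            hRmem (t - 1) (by omega) le_rfl, hne1, hne2, hcov1⟩
      · split_ifs at hA with hb
        · exact absurd hA (Finset.notMem_empty A)
        · obtain rfl := Finset.mem_singleton.mp hA
          obtain ⟨hne1, hne2, hcov1⟩ := aux_cover_endpoint ht hF2c
            (hQF 1 ht1) (hPG (t - 1) (by omega)) hb
          exact ⟨cQ 1, hQmem 1 le_rfl (by omega), cP (t - 1),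
            hPmem (t - 1) (by omega) le_rfl, hne1, hne2, hcov1⟩
      · split_ifs at hA with hb
        · exact absurd hA (Finset.notMem_empty A)
        · obtain rfl := Finset.mem_singleton.mp hA
          obtain ⟨hne1, hne2, hcov1⟩ := aux_cover_endpoint ht hF3c
            (hRF 1 ht1) (hQG (t - 1) (by omega)) hb
          exact ⟨cR 1, hRmem 1 le_rfl (by omega), cQ (t - 1),
            hQmem (t - 1) (by omega) le_rfl, hne1, hne2, hcov1⟩
    exact aux_no_leaf hΔ T hTsub hTne hcov
  -- conclude
  apply csSup_le
  · exact ⟨0, ∅, ⟨Finset.empty_subset _, by simp⟩, Finset.card_empty⟩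
  · rintro r ⟨M, hM, rfl⟩
    exact key M hM

end
end

section
/- Let t ≥ 2, let Γ be a broom graph containing a directed path on t vertices, and let Γ_t be its t-path simplicial tree. Then I(Γ_t)^{[ν(Γ_t)]} has linear quotients. -/
noncomputable section

open Finset MvPolynomial

/-- The vertex type for broom graphs: `Sum.inl i` is the `i`-th handle vertex
(`0 ≤ i ≤ h`), and `Sum.inr (j, a)` is the `a`-th leaf attached at the handle
vertex `j`. -/
abbrev BroomVertex : Type := ℕ ⊕ (ℕ × ℕ)

/-- The directed `t`-paths of the broom graph of height `h` with `ℓ j` leaves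
attached at the handle vertex `j` (for `j < h`, i.e. at handle vertices other
than the last one; the handle vertices are `0, …, h`).  A directed `t`-path
either consists of `t` consecutive handle vertices, or of `t - 1` consecutive
handle vertices followed by a leaf attached at the last of them.  These are the
facets of the `t`-path simplicial tree `Γ_t` of the broom graph. -/
def broomFacets (h t : ℕ) (ℓ : ℕ → ℕ) : Finset (Finset BroomVertex) :=
  ((Finset.range (h + 2 - t)).image fun i =>
      (Finset.Icc i (i + t - 1)).image Sum.inl) ∪
    (Finset.range h).biUnion fun j =>
      if t - 2 ≤ j then
        (Finset.range (ℓ j)).image fun a =>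
          insert (Sum.inr (j, a)) ((Finset.Icc (j - (t - 2)) j).image Sum.inl)
      else ∅

namespace BroomAux

variable {V : Type} [DecidableEq V]

section Ord

variable {κ : Type} [LinearOrder κ]

def InSym (A B : Finset V) (x : V) : Prop := (x ∈ A ∧ x ∉ B) ∨ (x ∈ B ∧ x ∉ A)

lemma inSym_comm {A B : Finset V} {x : V} : InSym A B x ↔ InSym B A x := or_comm

/-- The "lex" order on finsets induced by an injective key into a linear order. -/
def rOrd (k : V → κ) (A B : Finset V) : Prop :=
  A = B ∨ ∃ m, m ∈ A ∧ m ∉ B ∧ ∀ x, InSym A B x → k m ≤ k x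

lemma exists_min_sym (k : V → κ) {A B : Finset V} (h : A ≠ B) :
    ∃ m, InSym A B m ∧ ∀ x, InSym A B x → k m ≤ k x := by
  have hD : ((A \ B) ∪ (B \ A)).Nonempty := by
    rw [Finset.nonempty_iff_ne_empty]
    intro h0
    apply h
    ext x
    constructor <;> intro hx <;> by_contra hx2
    · exact Finset.notMem_empty x (h0 ▸ Finset.mem_union_left _ (Finset.mem_sdiff.2 ⟨hx, hx2⟩))
    · exact Finset.notMem_empty x (h0 ▸ Finset.mem_union_right _ (Finset.mem_sdiff.2 ⟨hx, hx2⟩))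
  obtain ⟨m, hm, hmin⟩ := Finset.exists_min_image _ k hD
  have hmem : ∀ x, InSym A B x ↔ x ∈ (A \ B) ∪ (B \ A) := by
    intro x
    simp [InSym, Finset.mem_union, Finset.mem_sdiff]
  exact ⟨m, (hmem m).2 hm, fun x hx => hmin x ((hmem x).1 hx)⟩

lemma rOrd_total (k : V → κ) (A B : Finset V) : rOrd k A B ∨ rOrd k B A := by
  by_cases hAB : A = B
  · exact Or.inl (Or.inl hAB)
  obtain ⟨m, hm, hmin⟩ := exists_min_sym k hAB
  rcases hm with ⟨h1, h2⟩ | ⟨h1, h2⟩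
  · exact Or.inl (Or.inr ⟨m, h1, h2, hmin⟩)
  · exact Or.inr (Or.inr ⟨m, h1, h2, fun x hx => hmin x (inSym_comm.1 hx)⟩)

lemma rOrd_antisymm (k : V → κ) (hk : Function.Injective k) {A B : Finset V}
    (h1 : rOrd k A B) (h2 : rOrd k B A) : A = B := by
  rcases h1 with h1 | ⟨m, hmA, hmB, hmin⟩
  · exact h1
  rcases h2 with h2 | ⟨m', hmA', hmB', hmin'⟩
  · exact h2.symm
  exfalso
  have e1 : k m ≤ k m' := hmin m' (Or.inr ⟨hmA', hmB'⟩)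
  have e2 : k m' ≤ k m := hmin' m (Or.inr ⟨hmA, hmB⟩)
  have : m = m' := hk (le_antisymm e1 e2)
  subst this
  exact hmB hmA'

lemma rOrd_trans (k : V → κ) (hk : Function.Injective k) {A B C : Finset V}
    (h1 : rOrd k A B) (h2 : rOrd k B C) : rOrd k A C := by
  rcases h1 with rfl | ⟨m1, hm1A, hm1B, hmin1⟩
  · exact h2
  rcases h2 with rfl | ⟨m2, hm2B, hm2C, hmin2⟩
  · exact Or.inr ⟨m1, hm1A, hm1B, hmin1⟩
  by_cases hAC : A = C
  · exact Or.inl hAC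
  have s1 : ∀ x, k x < k m1 → (x ∈ A ↔ x ∈ B) := by
    intro x hx
    by_contra hne
    have hs : InSym A B x := by
      unfold InSym; tauto
    exact absurd (hmin1 x hs) (not_le.2 hx)
  have s2 : ∀ x, k x < k m2 → (x ∈ B ↔ x ∈ C) := by
    intro x hx
    by_contra hne
    have hs : InSym B C x := by
      unfold InSym; tauto
    exact absurd (hmin2 x hs) (not_le.2 hx)
  rcases le_or_gt (k m1) (k m2) with hle | hlt
  · have hm1C : m1 ∉ C := by
      rcases lt_or_eq_of_le hle with hlt1 | heq
      · intro hC; exact hm1B ((s2 m1 hlt1).2 hC)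
      · exfalso; exact hm1B (hk heq ▸ hm2B)
    refine Or.inr ⟨m1, hm1A, hm1C, ?_⟩
    intro x hx
    by_contra hxlt
    push_neg at hxlt
    have hxAB := s1 x hxlt
    have hxBC := s2 x (lt_of_lt_of_le hxlt hle)
    rcases hx with ⟨a, b⟩ | ⟨a, b⟩
    · exact b (hxBC.1 (hxAB.1 a))
    · exact b (hxAB.2 (hxBC.2 a))
  · have hm2A : m2 ∈ A := (s1 m2 hlt).2 hm2B
    refine Or.inr ⟨m2, hm2A, hm2C, ?_⟩
    intro x hx
    by_contra hxlt
    push_neg at hxlt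
    have hxAB := s1 x (hxlt.trans hlt)
    have hxBC := s2 x hxlt
    rcases hx with ⟨a, b⟩ | ⟨a, b⟩
    · exact b (hxBC.1 (hxAB.1 a))
    · exact b (hxAB.2 (hxBC.2 a))

end Ord

section Ind

/-- Indicator finsupp of a finset. -/
def indF (U : Finset V) : V →₀ ℕ :=
  ⟨U, fun v => if v ∈ U then 1 else 0, by intro a; by_cases h : a ∈ U <;> simp [h]⟩

lemma indF_apply (U : Finset V) (v : V) : indF U v = if v ∈ U then 1 else 0 := rfl

lemma indF_support (U : Finset V) : (indF U).support = U := rfl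

lemma indF_empty : indF (∅ : Finset V) = 0 := by
  ext v; simp [indF_apply]

lemma indF_injective : Function.Injective (indF : Finset V → (V →₀ ℕ)) := by
  intro A B h
  have : (indF A).support = (indF B).support := by rw [h]
  exact this

lemma indF_le_iff {A B : Finset V} : indF A ≤ indF B ↔ A ⊆ B := by
  constructor
  · intro h x hx
    have hx2 := h x
    rw [indF_apply, indF_apply, if_pos hx] at hx2
    by_contra hB
    rw [if_neg hB] at hx2
    omega
  · intro h x
    rw [indF_apply, indF_apply]
    by_cases hx : x ∈ A
    · simp [hx, h hx]
    · simp [hx]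

lemma indF_sdiff (A B : Finset V) : indF A - indF B = indF (A \ B) := by
  ext v
  rw [Finsupp.tsub_apply, indF_apply, indF_apply, indF_apply]
  by_cases h1 : v ∈ A <;> by_cases h2 : v ∈ B <;>
    simp [h1, h2, Finset.mem_sdiff]

lemma indF_singleton (v : V) : indF ({v} : Finset V) = Finsupp.single v 1 := by
  ext w
  rw [indF_apply, Finsupp.single_apply]
  by_cases h : w = v
  · subst h; simp
  · simp [h, Ne.symm h]

lemma indF_insert {v : V} {U : Finset V} (h : v ∉ U) :
    indF (insert v U) = Finsupp.single v 1 + indF U := by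
  ext w
  rw [Finsupp.add_apply, indF_apply, indF_apply, Finsupp.single_apply]
  by_cases h1 : v = w
  · subst h1; simp [h]
  · by_cases h2 : w ∈ U <;> simp [h1, h2, Ne.symm h1]

lemma degOf_add (f g : V →₀ ℕ) : degOf (f + g) = degOf f + degOf g :=
  Finsupp.sum_add_index' (fun _ => rfl) (fun _ _ _ => rfl)

lemma degOf_eq_zero {f : V →₀ ℕ} (h : degOf f = 0) : f = 0 := by
  ext v
  simp only [Finsupp.coe_zero, Pi.zero_apply]
  by_contra hv
  have hvs : v ∈ f.support := Finsupp.mem_support_iff.2 hv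
  have h2 : f v ≤ degOf f := by
    unfold degOf Finsupp.sum
    exact Finset.single_le_sum (f := fun a => f a) (fun _ _ => Nat.zero_le _) hvs
  omega

lemma degOf_mono {f g : V →₀ ℕ} (h : f ≤ g) : degOf f ≤ degOf g := by
  rw [← add_tsub_cancel_of_le h, degOf_add]
  exact Nat.le_add_right _ _

lemma eq_of_le_of_degOf_eq {f g : V →₀ ℕ} (h : f ≤ g) (hd : degOf f = degOf g) : f = g := by
  have h2 : f + (g - f) = g := add_tsub_cancel_of_le h
  have h3 : degOf f + degOf (g - f) = degOf g := by rw [← degOf_add, h2]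
  have h4 : degOf (g - f) = 0 := by omega
  rw [← h2, degOf_eq_zero h4, add_zero]

lemma degOf_indF (U : Finset V) : degOf (indF U) = U.card := by
  unfold degOf Finsupp.sum
  rw [indF_support]
  have : ∀ v ∈ U, indF U v = 1 := fun v hv => by rw [indF_apply, if_pos hv]
  rw [Finset.sum_congr rfl this, Finset.sum_const, smul_eq_mul, mul_one]

end Ind

section Alg

variable (K : Type) [Field K]

lemma X_eq_monomial (v : V) : (X v : MvPolynomial V K) = monomial (Finsupp.single v 1) 1 := rfl

lemma prod_X_eq (U : Finset V) :
    (∏ v ∈ U, (X v : MvPolynomial V K)) = monomial (indF U) 1 := by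
  induction U using Finset.induction_on with
  | empty => rw [Finset.prod_empty, indF_empty, monomial_zero', C_1]
  | insert a s h ih =>
      rw [Finset.prod_insert h, ih, indF_insert h, X_eq_monomial, monomial_mul, one_mul]

lemma colon_span_monomial (A : Set (V →₀ ℕ)) (b : V →₀ ℕ) :
    Submodule.colon (Ideal.span ((fun d => monomial d (1 : K)) '' A))
        (Ideal.span {monomial b (1 : K)}) =
      Ideal.span ((fun d => monomial d (1 : K)) '' ((fun a => a - b) '' A)) := by
  classical
  apply le_antisymm
  · intro r hr
    rw [Ideal.mem_colon_span_singleton, mem_ideal_span_monomial_image] at hr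
    rw [mem_ideal_span_monomial_image]
    intro e he
    have hmem : e + b ∈ (r * monomial b (1 : K)).support := by
      rw [mem_support_iff, coeff_mul_monomial, mul_one]
      exact mem_support_iff.1 he
    obtain ⟨a, ha, hab⟩ := hr _ hmem
    exact ⟨a - b, Set.mem_image_of_mem _ ha, tsub_le_iff_right.2 hab⟩
  · rw [Ideal.span_le]
    rintro p ⟨d, ⟨a, ha, rfl⟩, rfl⟩
    dsimp only
    rw [SetLike.mem_coe, Ideal.mem_colon_span_singleton, monomial_mul, mul_one,
      mem_ideal_span_monomial_image]
    intro e he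
    rw [support_monomial, if_neg (one_ne_zero' K), Finset.mem_singleton] at he
    exact ⟨a, ha, he ▸ le_tsub_add⟩

lemma span_monomial_eq_span_X (T : Set (Finset V))
    (h2 : ∀ W ∈ T, ∃ v, ({v} : Finset V) ∈ T ∧ v ∈ W) :
    Ideal.span ((fun d => monomial d (1 : K)) '' (indF '' T)) =
      Ideal.span ((fun v => (X v : MvPolynomial V K)) '' {v | ({v} : Finset V) ∈ T}) := by
  classical
  apply le_antisymm <;> rw [Ideal.span_le]
  · rintro p ⟨d, ⟨W, hW, rfl⟩, rfl⟩
    dsimp only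
    obtain ⟨v, hvT, hvW⟩ := h2 W hW
    have hdvd : (X v : MvPolynomial V K) ∣ monomial (indF W) 1 := by
      rw [X_eq_monomial]
      rw [monomial_dvd_monomial]
      exact ⟨Or.inr (Finsupp.single_le_iff.2 (by rw [indF_apply, if_pos hvW])), dvd_refl _⟩
    obtain ⟨w, hw⟩ := hdvd
    rw [SetLike.mem_coe, hw]
    exact Ideal.mul_mem_right _ _ (Ideal.subset_span ⟨v, hvT, rfl⟩)
  · rintro p ⟨v, hv, rfl⟩
    dsimp only
    rw [SetLike.mem_coe, X_eq_monomial, ← indF_singleton]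
    exact Ideal.subset_span ⟨indF {v}, ⟨{v}, hv, rfl⟩, rfl⟩

lemma monomial_mem_span {A : Set (V →₀ ℕ)} {c : V →₀ ℕ}
    (h : ∃ a ∈ A, a ≤ c) : monomial c (1 : K) ∈ Ideal.span ((fun d => monomial d (1 : K)) '' A) := by
  classical
  rw [mem_ideal_span_monomial_image]
  intro e he
  rw [support_monomial, if_neg (one_ne_zero' K), Finset.mem_singleton] at he
  subst he
  exact h

lemma isMinGen_iff (E : Finset (Finset V)) (D : ℕ) (hD : ∀ U ∈ E, U.card = D)
    (u : MvPolynomial V K) :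
    IsMinGen (Ideal.span ((fun d => monomial d (1 : K)) '' (indF '' (E : Set (Finset V))))) u ↔
      ∃ U ∈ E, u = monomial (indF U) (1 : K) := by
  classical
  constructor
  · rintro ⟨⟨d, rfl⟩, hu, hmin⟩
    rw [mem_ideal_span_monomial_image] at hu
    have hd : d ∈ (monomial d (1 : K)).support := by
      rw [support_monomial, if_neg (one_ne_zero' K)]; exact Finset.mem_singleton_self d
    obtain ⟨a, ⟨U, hU, rfl⟩, hle⟩ := hu d hd
    have hvI : monomial (indF U) (1 : K) ∈
        Ideal.span ((fun d => monomial d (1 : K)) '' (indF '' (E : Set (Finset V)))) :=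
      Ideal.subset_span ⟨indF U, ⟨U, hU, rfl⟩, rfl⟩
    have hdvd : monomial (indF U) (1 : K) ∣ monomial d 1 :=
      monomial_dvd_monomial.2 ⟨Or.inr hle, dvd_refl _⟩
    have := hmin _ ⟨indF U, rfl⟩ hvI hdvd
    exact ⟨U, hU, this.symm⟩
  · rintro ⟨U, hU, rfl⟩
    refine ⟨⟨indF U, rfl⟩, Ideal.subset_span ⟨indF U, ⟨U, hU, rfl⟩, rfl⟩, ?_⟩
    rintro v ⟨c, rfl⟩ hvI hdvd
    rw [mem_ideal_span_monomial_image] at hvI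
    have hc : c ∈ (monomial c (1 : K)).support := by
      rw [support_monomial, if_neg (one_ne_zero' K)]; exact Finset.mem_singleton_self c
    obtain ⟨a, ⟨U', hU', rfl⟩, hle'⟩ := hvI c hc
    have hcle : c ≤ indF U := by
      rcases (monomial_dvd_monomial.1 hdvd).1 with h | h
      · exact absurd h (one_ne_zero' K)
      · exact h
    have hdeg1 : degOf (indF U') = D := by rw [degOf_indF]; exact hD U' hU'
    have hdeg2 : degOf (indF U) = D := by rw [degOf_indF]; exact hD U hU
    have hdegc : degOf c = D := by
      have l1 := degOf_mono hle'
      have l2 := degOf_mono hcle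
      omega
    have : c = indF U := eq_of_le_of_degOf_eq hcle (by omega)
    rw [this]

end Alg


section Master

variable (K : Type) [Field K]

theorem master {κ : Type} [LinearOrder κ] (k : V → κ) (hk : Function.Injective k)
    (E : Finset (Finset V)) (D : ℕ) (hD : ∀ U ∈ E, U.card = D)
    (hEx : ∀ U ∈ E, ∀ U' ∈ E, U ≠ U' → rOrd k U' U →
      ∃ W ∈ E, ∃ x y, x ∈ U ∧ y ∉ U ∧ y ∈ U' ∧ k y < k x ∧ W = insert y (U.erase x)) :
    HasLinearQuotients
      (Ideal.span ((fun d => monomial d (1 : K)) '' (indF '' (E : Set (Finset V))))) := by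
  classical
  letI : DecidableRel (rOrd k (κ := κ) (V := V)) := fun A B => Classical.dec _
  haveI hT : IsTrans (Finset V) (rOrd k) := ⟨fun _ _ _ => rOrd_trans k hk⟩
  haveI hA : IsAntisymm (Finset V) (rOrd k) := ⟨fun _ _ => rOrd_antisymm k hk⟩
  haveI hTot : IsTotal (Finset V) (rOrd k) := ⟨rOrd_total k⟩
  set Ls : List (Finset V) := E.sort (rOrd k) with hLs
  have hsorted : Ls.Pairwise (rOrd k) := Finset.pairwise_sort _ _
  have hnodup : Ls.Nodup := Finset.sort_nodup _ _
  have hmem : ∀ W : Finset V, W ∈ Ls ↔ W ∈ E := fun W => Finset.mem_sort _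
  have hfinj : Function.Injective (fun U : Finset V => monomial (indF U) (1 : K)) :=
    fun A B h => indF_injective (monomial_left_injective (one_ne_zero' K) h)
  refine ⟨Ls.map (fun U => monomial (indF U) (1 : K)), hnodup.map hfinj, ?_, ?_⟩
  · intro u
    rw [List.mem_map, isMinGen_iff K E D hD]
    constructor
    · rintro ⟨U, hU, rfl⟩; exact ⟨U, (hmem U).1 hU, rfl⟩
    · rintro ⟨U, hU, rfl⟩; exact ⟨U, (hmem U).2 hU, rfl⟩
  · intro i hi h1i
    have hlen : i < Ls.length := by simpa using hi
    set Ui : Finset V := Ls.get ⟨i, hlen⟩ with hUidef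
    have hUiE : Ui ∈ E := (hmem _).1 (Ls.get_mem ⟨i, hlen⟩)
    have htake_mem : ∀ W, W ∈ Ls.take i → W ∈ E ∧ W ≠ Ui ∧ rOrd k W Ui := by
      intro W hW
      rw [List.mem_take_iff_getElem] at hW
      obtain ⟨j, hj, rfl⟩ := hW
      have hji : j < i := lt_of_lt_of_le hj (min_le_left _ _)
      have hj2 : j < Ls.length := lt_of_lt_of_le hj (min_le_right _ _)
      refine ⟨(hmem _).1 (List.getElem_mem _), ?_, ?_⟩
      · intro heq
        have h2 : Ls.get ⟨j, hj2⟩ = Ls.get ⟨i, hlen⟩ := heq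
        have h3 := hnodup.get_inj_iff.1 h2
        simp only [Fin.mk.injEq] at h3
        omega
      · exact hsorted.rel_get_of_lt (a := ⟨j, hj2⟩) (b := ⟨i, hlen⟩) (Fin.mk_lt_mk.2 hji)
    have htake_mem' : ∀ W, W ∈ E → W ≠ Ui → rOrd k W Ui → W ∈ Ls.take i := by
      intro W hWE hWne hWr
      have hWLs : W ∈ Ls := (hmem W).2 hWE
      rw [List.mem_iff_get] at hWLs
      obtain ⟨⟨j, hj⟩, rfl⟩ := hWLs
      have hji : j < i := by
        rcases lt_trichotomy j i with h | h | h
        · exact h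
        · exfalso; subst h; exact hWne rfl
        · exfalso
          have h4 := hsorted.rel_get_of_lt (a := ⟨i, hlen⟩) (b := ⟨j, hj⟩) (Fin.mk_lt_mk.2 h)
          exact hWne (rOrd_antisymm k hk hWr h4)
      rw [List.mem_take_iff_getElem]
      exact ⟨j, lt_min hji hj, rfl⟩
    set Tpre : Set (Finset V) := {W | W ∈ Ls.take i} with hTpre
    set T : Set (Finset V) := (fun W => W \ Ui) '' Tpre with hT
    refine ⟨{v | ({v} : Finset V) ∈ T}, ?_⟩
    have hget : (Ls.map (fun U => monomial (indF U) (1 : K))).get ⟨i, hi⟩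
        = monomial (indF Ui) (1 : K) := by
      simp [hUidef, List.get_eq_getElem]
    have hsetpre : {q | q ∈ (Ls.map (fun U => monomial (indF U) (1 : K))).take i}
        = (fun d => monomial d (1 : K)) '' (indF '' Tpre) := by
      ext q
      simp only [Set.mem_setOf_eq, ← List.map_take, List.mem_map, Set.mem_image, hTpre]
      constructor
      · rintro ⟨W, hW, rfl⟩
        exact ⟨indF W, ⟨W, hW, rfl⟩, rfl⟩
      · rintro ⟨d, ⟨W, hW, rfl⟩, rfl⟩
        exact ⟨W, hW, rfl⟩
    rw [hget, hsetpre, colon_span_monomial K (indF '' Tpre) (indF Ui)]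
    have himg : ((fun a => a - indF Ui) '' (indF '' Tpre)) = indF '' T := by
      rw [hT, Set.image_image, Set.image_image]
      apply Set.image_congr
      intro W _
      exact indF_sdiff W Ui
    rw [himg]
    apply span_monomial_eq_span_X
    rintro W' ⟨Uj, hUj, rfl⟩
    obtain ⟨hUjE, hUjne, hUjr⟩ := htake_mem Uj hUj
    obtain ⟨W, hWE, x, y, hxU, hyU, hyU', hkyx, rfl⟩ :=
      hEx Ui hUiE Uj hUjE (Ne.symm hUjne) hUjr
    have hWdiff : insert y (Ui.erase x) \ Ui = {y} := by
      ext z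
      simp only [Finset.mem_sdiff, Finset.mem_insert, Finset.mem_erase, Finset.mem_singleton]
      constructor
      · rintro ⟨hz1 | ⟨_, hz2⟩, hz3⟩
        · exact hz1
        · exact absurd hz2 hz3
      · rintro rfl
        exact ⟨Or.inl rfl, hyU⟩
    have hWtake : insert y (Ui.erase x) ∈ Ls.take i := by
      apply htake_mem' _ hWE
      · intro heq
        exact hyU (heq ▸ Finset.mem_insert_self y _)
      · refine Or.inr ⟨y, Finset.mem_insert_self y _, hyU, ?_⟩
        intro z hz
        have hzxy : z = y ∨ z = x := by
          rcases hz with ⟨hz1, hz2⟩ | ⟨hz1, hz2⟩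
          · rcases Finset.mem_insert.1 hz1 with h | h
            · exact Or.inl h
            · exact absurd (Finset.mem_of_mem_erase h) hz2
          · right
            by_contra hzx
            exact hz2 (Finset.mem_insert.2 (Or.inr (Finset.mem_erase.2 ⟨hzx, hz1⟩)))
        rcases hzxy with rfl | rfl
        · exact le_refl _
        · exact le_of_lt hkyx
    exact ⟨y, ⟨insert y (Ui.erase x), hWtake, hWdiff⟩, Finset.mem_sdiff.2 ⟨hyU', hyU⟩⟩

end Master

section BroomComb

/-- handle facet -/
def Hf (t i : ℕ) : Finset BroomVertex := (Finset.Icc i (i + t - 1)).image Sum.inl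

/-- leaf facet -/
def Lf (t j a : ℕ) : Finset BroomVertex :=
  insert (Sum.inr (j, a)) ((Finset.Icc (j - (t - 2)) j).image Sum.inl)

/-- position of a vertex -/
def posn : BroomVertex → ℕ := Sum.elim id Prod.fst

/-- key for the vertex order -/
def vkey : BroomVertex → Lex (ℕ × Lex (ℕ × ℕ))
  | Sum.inl i => toLex (i, toLex (0, 0))
  | Sum.inr (j, a) => toLex (j, toLex (1, a))

lemma vkey_injective : Function.Injective vkey := by
  intro u v huv
  match u, v with
  | Sum.inl x, Sum.inl y => simp only [vkey, toLex_inj, Prod.mk.injEq] at huv; rw [huv.1]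
  | Sum.inl x, Sum.inr (j, a) => simp only [vkey, toLex_inj, Prod.mk.injEq] at huv; omega
  | Sum.inr (j, a), Sum.inl x => simp only [vkey, toLex_inj, Prod.mk.injEq] at huv; omega
  | Sum.inr (j, a), Sum.inr (j', a') =>
      simp only [vkey, toLex_inj, Prod.mk.injEq] at huv
      rw [huv.1, huv.2.2]

lemma vkey_inl_lt_inl {x y : ℕ} : vkey (Sum.inl x) < vkey (Sum.inl y) ↔ x < y := by
  simp [vkey, Prod.Lex.lt_iff]

lemma vkey_inl_lt_inr {x j a : ℕ} : vkey (Sum.inl x) < vkey (Sum.inr (j, a)) ↔ x ≤ j := by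
  simp only [vkey, Prod.Lex.lt_iff, ofLex_toLex]
  omega

lemma vkey_inr_lt_inl {x j a : ℕ} : vkey (Sum.inr (j, a)) < vkey (Sum.inl x) ↔ j < x := by
  simp only [vkey, Prod.Lex.lt_iff, ofLex_toLex]
  omega

lemma vkey_inr_lt_inr {j a j' a' : ℕ} :
    vkey (Sum.inr (j, a)) < vkey (Sum.inr (j', a')) ↔ j < j' ∨ (j = j' ∧ a < a') := by
  simp only [vkey, Prod.Lex.lt_iff, ofLex_toLex]
  constructor
  · rintro (h1 | ⟨h1, h2⟩)
    · exact Or.inl h1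
    · simp only [lt_self_iff_false, true_and, false_or] at h2
      exact Or.inr ⟨h1, h2⟩
  · rintro (h1 | ⟨h1, h2⟩)
    · exact Or.inl h1
    · exact Or.inr ⟨h1, Or.inr ⟨trivial, h2⟩⟩

lemma mem_Hf_inl {t i x : ℕ} : Sum.inl x ∈ Hf t i ↔ i ≤ x ∧ x ≤ i + t - 1 := by
  simp [Hf, Finset.mem_image, Finset.mem_Icc]

lemma not_mem_Hf_inr {t i : ℕ} {p : ℕ × ℕ} : Sum.inr p ∉ Hf t i := by
  simp [Hf]

lemma mem_Lf_inl {t j a x : ℕ} : Sum.inl x ∈ Lf t j a ↔ j - (t - 2) ≤ x ∧ x ≤ j := by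
  simp [Lf, Finset.mem_insert, Finset.mem_image, Finset.mem_Icc]

lemma mem_Lf_inr {t j a : ℕ} {p : ℕ × ℕ} : Sum.inr p ∈ Lf t j a ↔ p = (j, a) := by
  simp [Lf, Finset.mem_insert, Finset.mem_image]

lemma card_Hf {t i : ℕ} (ht : 2 ≤ t) : (Hf t i).card = t := by
  rw [Hf, Finset.card_image_of_injective _ Sum.inl_injective, Nat.card_Icc]
  omega

lemma card_Lf {t j a : ℕ} (ht : 2 ≤ t) (hj : t - 2 ≤ j) : (Lf t j a).card = t := by
  rw [Lf, Finset.card_insert_of_notMem (by simp), Finset.card_image_of_injective _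
    Sum.inl_injective, Nat.card_Icc]
  omega

variable {h t : ℕ} {ℓ : ℕ → ℕ}

lemma mem_broomFacets_iff {F : Finset BroomVertex} :
    F ∈ broomFacets h t ℓ ↔ (∃ i, i < h + 2 - t ∧ F = Hf t i) ∨
      (∃ j a, t - 2 ≤ j ∧ j < h ∧ a < ℓ j ∧ F = Lf t j a) := by
  constructor
  · intro hF
    rcases Finset.mem_union.1 hF with hF | hF
    · obtain ⟨i, hi, rfl⟩ := Finset.mem_image.1 hF
      exact Or.inl ⟨i, Finset.mem_range.1 hi, rfl⟩
    · obtain ⟨j, hj, hF2⟩ := Finset.mem_biUnion.1 hF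
      by_cases hc : t - 2 ≤ j
      · rw [if_pos hc] at hF2
        obtain ⟨a, ha, rfl⟩ := Finset.mem_image.1 hF2
        exact Or.inr ⟨j, a, hc, Finset.mem_range.1 hj, Finset.mem_range.1 ha, rfl⟩
      · rw [if_neg hc] at hF2
        exact absurd hF2 (Finset.notMem_empty F)
  · intro hF
    rcases hF with ⟨i, hi, rfl⟩ | ⟨j, a, hc, hj, ha, rfl⟩
    · exact Finset.mem_union_left _ (Finset.mem_image.2 ⟨i, Finset.mem_range.2 hi, rfl⟩)
    · refine Finset.mem_union_right _ (Finset.mem_biUnion.2 ⟨j, Finset.mem_range.2 hj, ?_⟩)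
      rw [if_pos hc]
      exact Finset.mem_image.2 ⟨a, Finset.mem_range.2 ha, rfl⟩

lemma card_facet (ht : 2 ≤ t) {F : Finset BroomVertex} (hF : F ∈ broomFacets h t ℓ) :
    F.card = t := by
  rcases mem_broomFacets_iff.1 hF with ⟨i, _, rfl⟩ | ⟨j, a, hj, _, _, rfl⟩
  · exact card_Hf ht
  · exact card_Lf ht hj

/-- every vertex of a facet, position bounds; and inl q ∉ F dichotomy -/
lemma facet_split (ht : 2 ≤ t) {F : Finset BroomVertex} (hF : F ∈ broomFacets h t ℓ)
    {q : ℕ} (hq : Sum.inl q ∉ F) :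
    (∀ v ∈ F, posn v < q) ∨ (∀ v ∈ F, q < posn v) := by
  rcases mem_broomFacets_iff.1 hF with ⟨i, _, rfl⟩ | ⟨j, a, hj, _, _, rfl⟩
  · rw [mem_Hf_inl] at hq
    push_neg at hq
    rcases Nat.lt_or_ge q i with hqi | hqi
    · right
      rintro (x | ⟨z, b⟩) hv
      · rw [mem_Hf_inl] at hv; simp only [posn, Sum.elim_inl, id]; omega
      · exact absurd hv not_mem_Hf_inr
    · left
      have hqi2 : i + t - 1 < q := hq hqi
      rintro (x | ⟨z, b⟩) hv
      · rw [mem_Hf_inl] at hv; simp only [posn, Sum.elim_inl, id]; omega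
      · exact absurd hv not_mem_Hf_inr
  · rw [mem_Lf_inl] at hq
    push_neg at hq
    rcases Nat.lt_or_ge q (j - (t - 2)) with hqi | hqi
    · right
      rintro (x | ⟨z, b⟩) hv
      · rw [mem_Lf_inl] at hv; simp only [posn, Sum.elim_inl, id]; omega
      · rw [mem_Lf_inr] at hv
        have hz : z = j := congrArg Prod.fst hv
        simp only [posn, Sum.elim_inr]
        omega
    · left
      have hqi2 : j < q := hq hqi
      rintro (x | ⟨z, b⟩) hv
      · rw [mem_Lf_inl] at hv; simp only [posn, Sum.elim_inl, id]; omega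
      · rw [mem_Lf_inr] at hv
        have hz : z = j := congrArg Prod.fst hv
        simp only [posn, Sum.elim_inr]
        omega

/-- facets have starts -/
def IsStart (F : Finset BroomVertex) (s : ℕ) : Prop :=
  Sum.inl s ∈ F ∧ ∀ v ∈ F, s ≤ posn v

lemma facet_start (ht : 2 ≤ t) {F : Finset BroomVertex} (hF : F ∈ broomFacets h t ℓ) :
    ∃ s, IsStart F s := by
  rcases mem_broomFacets_iff.1 hF with ⟨i, _, rfl⟩ | ⟨j, a, hj, _, _, rfl⟩
  · refine ⟨i, mem_Hf_inl.2 ⟨le_refl i, by omega⟩, ?_⟩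
    rintro (x | ⟨z, b⟩) hv
    · rw [mem_Hf_inl] at hv; simp only [posn, Sum.elim_inl, id]; omega
    · exact absurd hv not_mem_Hf_inr
  · refine ⟨j - (t - 2), mem_Lf_inl.2 ⟨le_refl _, by omega⟩, ?_⟩
    rintro (x | ⟨z, b⟩) hv
    · rw [mem_Lf_inl] at hv; simp only [posn, Sum.elim_inl, id]; omega
    · rw [mem_Lf_inr] at hv
      have hz : z = j := congrArg Prod.fst hv
      simp only [posn, Sum.elim_inr]
      omega

lemma Lf_inj {t j a j' a' : ℕ} (heq : Lf t j a = Lf t j' a') : j = j' ∧ a = a' := by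
  have h1 : Sum.inr (j, a) ∈ Lf t j' a' := heq ▸ Finset.mem_insert_self _ _
  rw [mem_Lf_inr] at h1
  exact ⟨congrArg Prod.fst h1, congrArg Prod.snd h1⟩

lemma Icc_filter_lt (a b c : ℕ) (hc : c ≤ b + 1) :
    (Finset.Icc a b).filter (fun z => z < c) = Finset.Ico a c := by
  ext z
  simp only [Finset.mem_filter, Finset.mem_Icc, Finset.mem_Ico]
  omega

lemma filter_image_inl (s : Finset ℕ) (P : ℕ → Prop) [DecidablePred P] :
    ((s.image Sum.inl).filter (fun v => P (posn v)) : Finset BroomVertex)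
      = (s.filter P).image Sum.inl := by
  ext v
  match v with
  | Sum.inl x => rw [Finset.mem_filter]; simp [posn]
  | Sum.inr p => rw [Finset.mem_filter]; simp [posn]

open scoped Classical in
lemma count_below (ht : 2 ≤ t) (M : Finset (Finset BroomVertex))
    (hMf : M ⊆ broomFacets h t ℓ)
    (hMd : ∀ F ∈ M, ∀ G ∈ M, F ≠ G → F ∩ G = ∅) (c : ℕ)
    (hsplit : ∀ F ∈ M, (∀ v ∈ F, posn v < c) ∨ (∀ v ∈ F, ¬ posn v < c)) :
    ((M.biUnion id).filter (fun v => posn v < c)).card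
      = t * (M.filter (fun F => ∀ v ∈ F, posn v < c)).card := by
  have hU : (M.biUnion id).filter (fun v => posn v < c)
      = (M.filter (fun F => ∀ v ∈ F, posn v < c)).biUnion id := by
    ext v
    simp only [Finset.mem_filter, Finset.mem_biUnion, id]
    constructor
    · rintro ⟨⟨F, hF, hvF⟩, hvc⟩
      refine ⟨F, ⟨hF, ?_⟩, hvF⟩
      rcases hsplit F hF with h1 | h1
      · exact h1
      · exact absurd hvc (h1 v hvF)
    · rintro ⟨F, ⟨hF, hall⟩, hvF⟩
      exact ⟨⟨F, hF, hvF⟩, hall v hvF⟩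
  rw [hU, Finset.card_biUnion]
  · have hcongr : ∀ F ∈ M.filter (fun F => ∀ v ∈ F, posn v < c), (id F).card = t := by
      intro F hF
      rw [id_eq]
      exact card_facet ht (hMf (Finset.mem_of_mem_filter F hF))
    rw [Finset.sum_congr rfl hcongr, Finset.sum_const, smul_eq_mul, mul_comm]
  · intro F hF G hG hne
    rw [Function.onFun, Finset.disjoint_left]
    intro v hvF hvG
    have := hMd F (Finset.mem_of_mem_filter F hF) G (Finset.mem_of_mem_filter G hG) hne
    have hmem : v ∈ F ∩ G := Finset.mem_inter.2 ⟨hvF, hvG⟩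
    rw [this] at hmem
    exact Finset.notMem_empty v hmem

open scoped Classical in
lemma count_below_straddle (ht : 2 ≤ t) (M : Finset (Finset BroomVertex))
    (hMf : M ⊆ broomFacets h t ℓ)
    (hMd : ∀ F ∈ M, ∀ G ∈ M, F ≠ G → F ∩ G = ∅) (c : ℕ)
    (F₀ : Finset BroomVertex) (hF₀ : F₀ ∈ M)
    (hsplit : ∀ F ∈ M, F ≠ F₀ → (∀ v ∈ F, posn v < c) ∨ (∀ v ∈ F, ¬ posn v < c))
    (hF₀c : ¬ (∀ v ∈ F₀, posn v < c)) :
    ((M.biUnion id).filter (fun v => posn v < c)).card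
      = t * ((M.erase F₀).filter (fun F => ∀ v ∈ F, posn v < c)).card
        + (F₀.filter (fun v => posn v < c)).card := by
  have hM : M = insert F₀ (M.erase F₀) := (Finset.insert_erase hF₀).symm
  have hbi : M.biUnion id = F₀ ∪ (M.erase F₀).biUnion id := by
    conv_lhs => rw [hM]
    rw [Finset.biUnion_insert]
    rfl
  have hdisj : Disjoint (F₀.filter (fun v => posn v < c))
      (((M.erase F₀).biUnion id).filter (fun v => posn v < c)) := by
    rw [Finset.disjoint_left]
    intro v hv1 hv2
    obtain ⟨G, hG, hvG⟩ := Finset.mem_biUnion.1 (Finset.mem_of_mem_filter v hv2)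
    have hGne : G ≠ F₀ := Finset.ne_of_mem_erase hG
    have hint := hMd G (Finset.mem_of_mem_erase hG) F₀ hF₀ hGne
    have : v ∈ G ∩ F₀ := Finset.mem_inter.2 ⟨hvG, Finset.mem_of_mem_filter v hv1⟩
    rw [hint] at this
    exact Finset.notMem_empty v this
  rw [hbi, Finset.filter_union, Finset.card_union_of_disjoint hdisj]
  rw [count_below ht (M.erase F₀) (fun F hF => hMf (Finset.mem_of_mem_erase hF))
    (fun F hF G hG hne => hMd F (Finset.mem_of_mem_erase hF) G (Finset.mem_of_mem_erase hG) hne)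
    c (fun F hF => hsplit F (Finset.mem_of_mem_erase hF) (Finset.ne_of_mem_erase hF))]
  omega

lemma dvd_of_mul_eq {T A B r : ℕ} (heq : T * A = T * B + r) : T ∣ r := by
  rcases le_or_gt B A with hle | hlt
  · refine ⟨A - B, ?_⟩
    have h2 : T * A = T * B + T * (A - B) := by
      rw [← Nat.mul_add]
      congr 1
      omega
    omega
  · have h3 : T * A ≤ T * B := Nat.mul_le_mul_left T (le_of_lt hlt)
    have h4 : r = 0 := by omega
    simp [h4]

lemma mul_eq_resolve {T A B r : ℕ} (hT : 2 ≤ T) (heq : T * A = T * B + r)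
    (hr : r ≤ T + 1) : r = 0 ∨ r = T := by
  obtain ⟨m, hm⟩ := dvd_of_mul_eq heq
  subst hm
  match m with
  | 0 => left; omega
  | 1 => right; omega
  | (n + 2) =>
      exfalso
      have : T * 2 ≤ T * (n + 2) := Nat.mul_le_mul_left T (by omega)
      omega

lemma mem_biUnion_id {M : Finset (Finset BroomVertex)} {v : BroomVertex} :
    v ∈ M.biUnion id ↔ ∃ F ∈ M, v ∈ F := by
  simp only [Finset.mem_biUnion, id_eq]

/-- swap a facet in a matching -/
lemma swap_matching (M : Finset (Finset BroomVertex))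
    (hMd : ∀ F ∈ M, ∀ G ∈ M, F ≠ G → F ∩ G = ∅)
    {Kf : Finset BroomVertex} (hK : Kf ∈ M) {x y : BroomVertex}
    (hx : x ∈ Kf) (hy : y ∉ M.biUnion id) :
    (∀ F₁ ∈ insert (insert y (Kf.erase x)) (M.erase Kf),
      ∀ G₁ ∈ insert (insert y (Kf.erase x)) (M.erase Kf), F₁ ≠ G₁ → F₁ ∩ G₁ = ∅)
    ∧ (insert (insert y (Kf.erase x)) (M.erase Kf)).card = M.card
    ∧ (insert (insert y (Kf.erase x)) (M.erase Kf)).biUnion id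
        = insert y ((M.biUnion id).erase x) := by
  have hxU : x ∈ M.biUnion id := Finset.mem_biUnion.2 ⟨Kf, hK, hx⟩
  have hxmem : ∀ F ∈ M, F ≠ Kf → x ∉ F := by
    intro F hF hne hxF
    have := hMd F hF Kf hK hne
    have h2 : x ∈ F ∩ Kf := Finset.mem_inter.2 ⟨hxF, hx⟩
    rw [this] at h2
    exact Finset.notMem_empty x h2
  have hnew_old : ∀ F ∈ M.erase Kf, (insert y (Kf.erase x)) ∩ F = ∅ := by
    intro F hF
    ext v
    simp only [Finset.mem_inter, Finset.mem_insert, Finset.mem_erase,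
      Finset.notMem_empty, iff_false, not_and]
    rintro (rfl | ⟨hvx, hvK⟩)
    · intro hvF
      exact hy (Finset.mem_biUnion.2 ⟨F, Finset.mem_of_mem_erase hF, hvF⟩)
    · intro hvF
      have := hMd Kf hK F (Finset.mem_of_mem_erase hF) (Ne.symm (Finset.ne_of_mem_erase hF))
      have h2 : v ∈ Kf ∩ F := Finset.mem_inter.2 ⟨hvK, hvF⟩
      rw [this] at h2
      exact Finset.notMem_empty v h2
  have hnotmem : insert y (Kf.erase x) ∉ M.erase Kf := by
    intro hmem
    exact hy (Finset.mem_biUnion.2 ⟨_, Finset.mem_of_mem_erase hmem, Finset.mem_insert_self y _⟩)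
  refine ⟨?_, ?_, ?_⟩
  · intro F₁ hF₁ G₁ hG₁ hne
    rcases Finset.mem_insert.1 hF₁ with rfl | hF₁ <;> rcases Finset.mem_insert.1 hG₁ with h2 | hG₁
    · exact absurd h2.symm hne
    · exact hnew_old G₁ hG₁
    · rw [h2, Finset.inter_comm]
      exact hnew_old F₁ hF₁
    · exact hMd F₁ (Finset.mem_of_mem_erase hF₁) G₁ (Finset.mem_of_mem_erase hG₁) hne
  · rw [Finset.card_insert_of_notMem hnotmem, Finset.card_erase_of_mem hK]
    have : 0 < M.card := Finset.card_pos.2 ⟨Kf, hK⟩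
    omega
  · ext v
    constructor
    · intro hv
      obtain ⟨F, hF, hvF⟩ := Finset.mem_biUnion.1 hv
      rcases Finset.mem_insert.1 hF with rfl | hF2
      · rcases Finset.mem_insert.1 hvF with rfl | hvK
        · exact Finset.mem_insert_self _ _
        · exact Finset.mem_insert.2 (Or.inr (Finset.mem_erase.2
            ⟨(Finset.mem_erase.1 hvK).1,
              Finset.mem_biUnion.2 ⟨Kf, hK, Finset.mem_of_mem_erase hvK⟩⟩))
      · refine Finset.mem_insert.2 (Or.inr (Finset.mem_erase.2
          ⟨?_, Finset.mem_biUnion.2 ⟨F, Finset.mem_of_mem_erase hF2, hvF⟩⟩))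
        intro heq
        exact hxmem F (Finset.mem_of_mem_erase hF2) (Finset.ne_of_mem_erase hF2) (heq ▸ hvF)
    · intro hv
      rcases Finset.mem_insert.1 hv with rfl | hv
      · exact Finset.mem_biUnion.2
          ⟨insert v (Kf.erase x), Finset.mem_insert_self _ _, Finset.mem_insert_self _ _⟩
      · obtain ⟨hvx, hvU⟩ := Finset.mem_erase.1 hv
        obtain ⟨F, hF, hvF⟩ := Finset.mem_biUnion.1 hvU
        by_cases hFK : F = Kf
        · subst hFK
          exact Finset.mem_biUnion.2 ⟨insert y (F.erase x), Finset.mem_insert_self _ _,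
            Finset.mem_insert.2 (Or.inr (Finset.mem_erase.2 ⟨hvx, hvF⟩))⟩
        · exact Finset.mem_biUnion.2
            ⟨F, Finset.mem_insert.2 (Or.inr (Finset.mem_erase.2 ⟨hFK, hF⟩)), hvF⟩

end BroomComb

section Exchange

variable {h t : ℕ} {ℓ : ℕ → ℕ}

lemma filter_posn_image_inl (s : Finset ℕ) (c : ℕ) :
    ((s.image Sum.inl).filter (fun v => posn v < c) : Finset BroomVertex)
      = (s.filter (fun z => z < c)).image Sum.inl := by
  ext v
  match v with
  | Sum.inl x => rw [Finset.mem_filter]; simp [posn]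
  | Sum.inr p => rw [Finset.mem_filter]; simp [posn]

lemma posn_inl (z : ℕ) : posn (Sum.inl z : BroomVertex) = z := rfl

lemma posn_inr (z b : ℕ) : posn (Sum.inr (z, b) : BroomVertex) = z := rfl

lemma posn_lt_vkey {v : BroomVertex} {q : ℕ} (hv : posn v < q) :
    vkey v < vkey (Sum.inl q) := by
  rcases v with z | ⟨z, b⟩
  · exact vkey_inl_lt_inl.2 (by simpa [posn_inl] using hv)
  · exact vkey_inr_lt_inl.2 (by simpa [posn_inr] using hv)

lemma broom_exchange (ht : 2 ≤ t) (ν : ℕ)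
    (hub : ∀ N : Finset (Finset BroomVertex), N ⊆ broomFacets h t ℓ →
      (∀ F ∈ N, ∀ G ∈ N, F ≠ G → F ∩ G = ∅) → N.card ≤ ν)
    {M M' : Finset (Finset BroomVertex)}
    (hMf : M ⊆ broomFacets h t ℓ)
    (hMd : ∀ F ∈ M, ∀ G ∈ M, F ≠ G → F ∩ G = ∅) (hMc : M.card = ν)
    (hM'f : M' ⊆ broomFacets h t ℓ)
    (hM'd : ∀ F ∈ M', ∀ G ∈ M', F ≠ G → F ∩ G = ∅)
    {p : BroomVertex} (hpU' : p ∈ M'.biUnion id) (hpU : p ∉ M.biUnion id)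
    (hmin : ∀ x, InSym (M'.biUnion id) (M.biUnion id) x → vkey p ≤ vkey x) :
    ∃ x y : BroomVertex, x ∈ M.biUnion id ∧ y ∉ M.biUnion id ∧ y ∈ M'.biUnion id ∧
      vkey y < vkey x ∧
      ∃ N, N ⊆ broomFacets h t ℓ ∧ (∀ F ∈ N, ∀ G ∈ N, F ≠ G → F ∩ G = ∅) ∧ N.card = ν ∧
        N.biUnion id = insert y ((M.biUnion id).erase x) := by
  classical
  have agree : ∀ w, vkey w < vkey p → (w ∈ M.biUnion id ↔ w ∈ M'.biUnion id) := by
    intro w hw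
    by_contra hne
    have hsym : InSym (M'.biUnion id) (M.biUnion id) w := by
      unfold InSym; tauto
    exact absurd (hmin w hsym) (not_le.2 hw)
  have finish : ∀ (Kf : Finset BroomVertex), Kf ∈ M → ∀ x y : BroomVertex, x ∈ Kf →
      y ∉ M.biUnion id → y ∈ M'.biUnion id → vkey y < vkey x →
      insert y (Kf.erase x) ∈ broomFacets h t ℓ →
      ∃ x' y' : BroomVertex, x' ∈ M.biUnion id ∧ y' ∉ M.biUnion id ∧ y' ∈ M'.biUnion id ∧
        vkey y' < vkey x' ∧
        ∃ N, N ⊆ broomFacets h t ℓ ∧ (∀ F ∈ N, ∀ G ∈ N, F ≠ G → F ∩ G = ∅) ∧ N.card = ν ∧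
          N.biUnion id = insert y' ((M.biUnion id).erase x') := by
    intro Kf hKf x y hxK hyU hyU' hlt hval
    obtain ⟨hNd, hNc, hNbi⟩ := swap_matching M hMd hKf hxK hyU
    refine ⟨x, y, mem_biUnion_id.2 ⟨Kf, hKf, hxK⟩, hyU, hyU', hlt,
      insert (insert y (Kf.erase x)) (M.erase Kf), ?_, hNd, by rw [hNc, hMc], hNbi⟩
    intro F hF
    rcases Finset.mem_insert.1 hF with rfl | hF
    · exact hval
    · exact hMf (Finset.mem_of_mem_erase hF)
  rcases p with q | ⟨j, a⟩
  -- ===================== Case A : p is a handle vertex =====================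
  · obtain ⟨F', hF'M', hqF'⟩ := mem_biUnion_id.1 hpU'
    have hnoM : ∀ F ∈ M, Sum.inl q ∉ F :=
      fun F hF hqF => hpU (mem_biUnion_id.2 ⟨F, hF, hqF⟩)
    have hsplitM : ∀ F ∈ M, (∀ v ∈ F, posn v < q) ∨ (∀ v ∈ F, ¬ posn v < q) := by
      intro F hF
      rcases facet_split ht (hMf hF) (hnoM F hF) with h1 | h1
      · exact Or.inl h1
      · exact Or.inr (fun v hv => by have := h1 v hv; omega)
    have hsplitM' : ∀ F ∈ M', F ≠ F' →
        (∀ v ∈ F, posn v < q) ∨ (∀ v ∈ F, ¬ posn v < q) := by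
      intro F hF hne
      have hq2 : Sum.inl q ∉ F := by
        intro hq3
        have hint := hM'd F hF F' hF'M' hne
        have h4 : Sum.inl q ∈ F ∩ F' := Finset.mem_inter.2 ⟨hq3, hqF'⟩
        rw [hint] at h4
        exact Finset.notMem_empty _ h4
      rcases facet_split ht (hM'f hF) hq2 with h1 | h1
      · exact Or.inl h1
      · exact Or.inr (fun v hv => by have := h1 v hv; omega)
    have hF'notlow : ¬ (∀ v ∈ F', posn v < q) := by
      intro hlow
      have := hlow _ hqF'
      rw [posn_inl] at this
      omega
    have cM := count_below ht M hMf hMd q hsplitM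
    have cM' := count_below_straddle ht M' hM'f hM'd q F' hF'M' hsplitM' hF'notlow
    have hfeq : (M.biUnion id).filter (fun v => posn v < q)
        = (M'.biUnion id).filter (fun v => posn v < q) := by
      ext v
      simp only [Finset.mem_filter]
      constructor
      · rintro ⟨hv1, hv2⟩
        exact ⟨(agree v (posn_lt_vkey hv2)).1 hv1, hv2⟩
      · rintro ⟨hv1, hv2⟩
        exact ⟨(agree v (posn_lt_vkey hv2)).2 hv1, hv2⟩
    -- data about F'
    have hF'data : ∃ s', s' ≤ q ∧ (F'.filter (fun v => posn v < q)).card = q - s' ∧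
        q - s' + 1 ≤ t ∧ (s' = q →
          (∀ x, q ≤ x → x + 2 ≤ q + t → Sum.inl x ∈ F') ∧ q + t ≤ h + 1) := by
      rcases mem_broomFacets_iff.1 (hM'f hF'M') with ⟨i', hi', hF'eq⟩ |
        ⟨j', a', hj', hjh', ha', hF'eq⟩
      · rw [hF'eq, mem_Hf_inl] at hqF'
        refine ⟨i', hqF'.1, ?_, by omega, ?_⟩
        · rw [hF'eq, Hf, filter_posn_image_inl, Icc_filter_lt _ _ _ (by omega),
            Finset.card_image_of_injective _ Sum.inl_injective, Nat.card_Ico]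
        · rintro rfl
          constructor
          · intro x hx1 hx2
            rw [hF'eq, mem_Hf_inl]
            omega
          · omega
      · rw [hF'eq, mem_Lf_inl] at hqF'
        refine ⟨j' - (t - 2), hqF'.1, ?_, by omega, ?_⟩
        · rw [hF'eq, Lf, Finset.filter_insert, if_neg (by rw [posn_inr]; omega),
            filter_posn_image_inl, Icc_filter_lt _ _ _ (by omega),
            Finset.card_image_of_injective _ Sum.inl_injective, Nat.card_Ico]
        · intro hs'
          constructor
          · intro x hx1 hx2
            rw [hF'eq, mem_Lf_inl]
            omega
          · omega
    obtain ⟨s', hs'q, hcard', hwidth, hrest⟩ := hF'data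
    have hfc : ((M.biUnion id).filter (fun v => posn v < q)).card
        = ((M'.biUnion id).filter (fun v => posn v < q)).card := by rw [hfeq]
    have heq3 : t * (M.filter (fun F => ∀ v ∈ F, posn v < q)).card
        = t * ((M'.erase F').filter (fun F => ∀ v ∈ F, posn v < q)).card + (q - s') := by
      omega
    have hqs' : s' = q := by
      rcases mul_eq_resolve ht heq3 (by omega) with h1 | h1 <;> omega
    obtain ⟨hcov, hqh⟩ := hrest hqs'
    -- the right part of M
    have hgap : ∀ x F, F ∈ M → Sum.inl x ∈ F → q ≤ x →
        ∃ sF, IsStart F sF ∧ q + 1 ≤ sF ∧ sF ≤ x := by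
      intro x F hF hxF hqx
      obtain ⟨sF, hsF⟩ := facet_start ht (hMf hF)
      refine ⟨sF, hsF, ?_, ?_⟩
      · rcases facet_split ht (hMf hF) (hnoM F hF) with h1 | h1
        · have := h1 _ hxF; rw [posn_inl] at this; omega
        · have := h1 _ hsF.1; rw [posn_inl] at this; omega
      · have := hsF.2 _ hxF; rw [posn_inl] at this; omega
    set T : Finset ℕ := (Finset.Icc (q + 1) (q + t - 1)).filter
      (fun s => ∃ F ∈ M, IsStart F s) with hTdef
    have hTne : T.Nonempty := by
      by_contra hTe
      rw [Finset.not_nonempty_iff_eq_empty] at hTe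
      have hfree : ∀ x, q ≤ x → x ≤ q + t - 1 → Sum.inl x ∉ M.biUnion id := by
        intro x hx1 hx2 hxU
        obtain ⟨F, hF, hxF⟩ := mem_biUnion_id.1 hxU
        obtain ⟨sF, hsF, ha1, ha2⟩ := hgap x F hF hxF hx1
        have hmem : sF ∈ T := Finset.mem_filter.2
          ⟨Finset.mem_Icc.2 ⟨ha1, by omega⟩, F, hF, hsF⟩
        exact Finset.eq_empty_iff_forall_notMem.1 hTe sF hmem
      have hHfval : Hf t q ∈ broomFacets h t ℓ :=
        mem_broomFacets_iff.2 (Or.inl ⟨q, by omega, rfl⟩)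
      have hHfnotM : Hf t q ∉ M := by
        intro hmem
        exact hpU (mem_biUnion_id.2 ⟨_, hmem, mem_Hf_inl.2 ⟨le_refl q, by omega⟩⟩)
      have hHfdisj : ∀ F ∈ M, Hf t q ∩ F = ∅ := by
        intro F hF
        ext v
        simp only [Finset.mem_inter, Finset.notMem_empty, iff_false, not_and]
        intro hv1 hv2
        rcases v with z | pz
        · rw [mem_Hf_inl] at hv1
          exact hfree z hv1.1 hv1.2 (mem_biUnion_id.2 ⟨F, hF, hv2⟩)
        · exact not_mem_Hf_inr hv1
      have hNd : ∀ F₁ ∈ insert (Hf t q) M, ∀ G₁ ∈ insert (Hf t q) M,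
          F₁ ≠ G₁ → F₁ ∩ G₁ = ∅ := by
        intro F₁ hF₁ G₁ hG₁ hne
        rcases Finset.mem_insert.1 hF₁ with rfl | hF₁ <;>
          rcases Finset.mem_insert.1 hG₁ with h2 | hG₁
        · exact absurd h2.symm hne
        · exact hHfdisj G₁ hG₁
        · rw [h2, Finset.inter_comm]; exact hHfdisj F₁ hF₁
        · exact hMd F₁ hF₁ G₁ hG₁ hne
      have hNcard := hub (insert (Hf t q) M)
        (fun F hF => by
          rcases Finset.mem_insert.1 hF with rfl | hF
          · exact hHfval
          · exact hMf hF) hNd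
      rw [Finset.card_insert_of_notMem hHfnotM] at hNcard
      omega
    obtain ⟨s₁, hs₁memT, hs₁le⟩ : ∃ s₁ ∈ T, ∀ s ∈ T, s₁ ≤ s :=
      ⟨T.min' hTne, T.min'_mem hTne, fun s hs => T.min'_le s hs⟩
    have hs₁mem : s₁ ∈ (Finset.Icc (q + 1) (q + t - 1)).filter
        (fun s => ∃ F ∈ M, IsStart F s) := hs₁memT
    rw [Finset.mem_filter] at hs₁mem
    obtain ⟨hs₁Icc, K, hKM, hKstart⟩ := hs₁mem
    rw [Finset.mem_Icc] at hs₁Icc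
    have hfree2 : ∀ x, q ≤ x → x < s₁ → Sum.inl x ∉ M.biUnion id := by
      intro x hx1 hx2 hxU
      obtain ⟨F, hF, hxF⟩ := mem_biUnion_id.1 hxU
      obtain ⟨sF, hsF, ha1, ha2⟩ := hgap x F hF hxF hx1
      have hsFT : sF ∈ T := Finset.mem_filter.2
        ⟨Finset.mem_Icc.2 ⟨ha1, by omega⟩, F, hF, hsF⟩
      have := hs₁le _ hsFT
      omega
    have hyU : Sum.inl (s₁ - 1) ∉ M.biUnion id := hfree2 _ (by omega) (by omega)
    have hyU' : Sum.inl (s₁ - 1) ∈ M'.biUnion id :=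
      mem_biUnion_id.2 ⟨F', hF'M', hcov _ (by omega) (by omega)⟩
    rcases mem_broomFacets_iff.1 (hMf hKM) with ⟨i₁, hi₁, hKeq⟩ |
      ⟨j₁, a₁, hj₁, hj₁h, ha₁, hKeq⟩
    · -- K is a handle facet, i₁ = s₁
      have hmem1 : i₁ ≤ s₁ ∧ s₁ ≤ i₁ + t - 1 := by
        have := hKstart.1
        rw [hKeq, mem_Hf_inl] at this
        exact this
      have hmem2 : s₁ ≤ i₁ := by
        have := hKstart.2 (Sum.inl i₁) (by rw [hKeq]; exact mem_Hf_inl.2 ⟨le_refl _, by omega⟩)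
        rw [posn_inl] at this
        exact this
      have hieq : i₁ = s₁ := by omega
      have hxK : Sum.inl (s₁ + t - 1) ∈ K := by
        rw [hKeq, mem_Hf_inl]
        omega
      have hval : insert (Sum.inl (s₁ - 1)) (K.erase (Sum.inl (s₁ + t - 1)))
          ∈ broomFacets h t ℓ := by
        have heqH : insert (Sum.inl (s₁ - 1) : BroomVertex)
            (K.erase (Sum.inl (s₁ + t - 1))) = Hf t (s₁ - 1) := by
          rw [hKeq]
          ext v
          rcases v with z | pz
          · simp only [Finset.mem_insert, Finset.mem_erase, mem_Hf_inl, ne_eq, Sum.inl.injEq]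
            omega
          · simp only [Finset.mem_insert, Finset.mem_erase]
            constructor
            · rintro (h1 | ⟨_, h1⟩)
              · exact absurd h1 (by simp)
              · exact absurd h1 not_mem_Hf_inr
            · intro h1
              exact absurd h1 not_mem_Hf_inr
        rw [heqH]
        exact mem_broomFacets_iff.2 (Or.inl ⟨s₁ - 1, by omega, rfl⟩)
      exact finish K hKM _ _ hxK hyU hyU' (vkey_inl_lt_inl.2 (by omega)) hval
    · -- K is a leaf facet
      have hmem1 : j₁ - (t - 2) ≤ s₁ ∧ s₁ ≤ j₁ := by
        have := hKstart.1
        rw [hKeq, mem_Lf_inl] at this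
        exact this
      have hmem2 : s₁ ≤ j₁ - (t - 2) := by
        have := hKstart.2 (Sum.inl (j₁ - (t - 2)))
          (by rw [hKeq]; exact mem_Lf_inl.2 ⟨le_refl _, by omega⟩)
        rw [posn_inl] at this
        exact this
      have hseq : j₁ = s₁ + t - 2 := by omega
      have hxK : Sum.inr (j₁, a₁) ∈ K := by
        rw [hKeq]
        exact mem_Lf_inr.2 rfl
      have hval : insert (Sum.inl (s₁ - 1)) (K.erase (Sum.inr (j₁, a₁)))
          ∈ broomFacets h t ℓ := by
        have heqH : insert (Sum.inl (s₁ - 1) : BroomVertex)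
            (K.erase (Sum.inr (j₁, a₁))) = Hf t (s₁ - 1) := by
          rw [hKeq, Lf, Finset.erase_insert (by simp)]
          ext v
          rcases v with z | pz
          · simp only [Finset.mem_insert, Finset.mem_image, Finset.mem_Icc, mem_Hf_inl,
              Sum.inl.injEq]
            constructor
            · rintro (h1 | ⟨w, hw, hweq⟩)
              · omega
              · omega
            · intro h1
              by_cases hz : z = s₁ - 1
              · exact Or.inl hz
              · exact Or.inr ⟨z, by omega, rfl⟩
          · simp only [Finset.mem_insert, Finset.mem_image]
            constructor
            · rintro (h1 | ⟨w, hw, hweq⟩)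
              · exact absurd h1 (by simp)
              · exact absurd hweq (by simp)
            · intro h1
              exact absurd h1 not_mem_Hf_inr
        rw [heqH]
        exact mem_broomFacets_iff.2 (Or.inl ⟨s₁ - 1, by omega, rfl⟩)
      exact finish K hKM _ _ hxK hyU hyU'
        (vkey_inl_lt_inr.2 (by omega)) hval
  -- ===================== Case B : p is a leaf vertex =====================
  · obtain ⟨F', hF'M', hpF'⟩ := mem_biUnion_id.1 hpU'
    have hF'all : F' = Lf t j a ∧ t - 2 ≤ j ∧ j < h ∧ a < ℓ j := by
      rcases mem_broomFacets_iff.1 (hM'f hF'M') with ⟨i', _, rfl⟩ |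
        ⟨j', a', hj', hjh', ha', rfl⟩
      · exact absurd hpF' not_mem_Hf_inr
      · rw [mem_Lf_inr] at hpF'
        have h1 : j = j' := congrArg Prod.fst hpF'
        have h2 : a = a' := congrArg Prod.snd hpF'
        subst h1; subst h2
        exact ⟨rfl, hj', hjh', ha'⟩
    obtain ⟨hF'L, hj2, hjh, haℓ⟩ := hF'all
    have hjU' : Sum.inl j ∈ M'.biUnion id :=
      mem_biUnion_id.2 ⟨F', hF'M', by rw [hF'L]; exact mem_Lf_inl.2 ⟨by omega, le_refl j⟩⟩
    have hjU : Sum.inl j ∈ M.biUnion id :=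
      (agree _ (vkey_inl_lt_inr.2 (le_refl j))).2 hjU'
    obtain ⟨G, hGM, hjG⟩ := mem_biUnion_id.1 hjU
    have hleafU : ∀ b, Sum.inr (j, b) ∈ M.biUnion id → G = Lf t j b := by
      intro b hb
      obtain ⟨F₂, hF₂, hbF₂⟩ := mem_biUnion_id.1 hb
      have hF₂eq : F₂ = Lf t j b := by
        rcases mem_broomFacets_iff.1 (hMf hF₂) with ⟨i₂, _, rfl⟩ | ⟨j₂, b₂, _, _, _, rfl⟩
        · exact absurd hbF₂ not_mem_Hf_inr
        · rw [mem_Lf_inr] at hbF₂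
          have h1 : j = j₂ := congrArg Prod.fst hbF₂
          have h2 : b = b₂ := congrArg Prod.snd hbF₂
          rw [h1, h2]
      subst hF₂eq
      by_contra hne
      have hint := hMd G hGM _ hF₂ hne
      have h3 : Sum.inl j ∈ G ∩ Lf t j b :=
        Finset.mem_inter.2 ⟨hjG, mem_Lf_inl.2 ⟨by omega, le_refl j⟩⟩
      rw [hint] at h3
      exact Finset.notMem_empty _ h3
    have hleafU' : ∀ b, Sum.inr (j, b) ∈ M'.biUnion id → b = a := by
      intro b hb
      obtain ⟨F₂, hF₂, hbF₂⟩ := mem_biUnion_id.1 hb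
      have hF₂eq : F₂ = Lf t j b := by
        rcases mem_broomFacets_iff.1 (hM'f hF₂) with ⟨i₂, _, rfl⟩ | ⟨j₂, b₂, _, _, _, rfl⟩
        · exact absurd hbF₂ not_mem_Hf_inr
        · rw [mem_Lf_inr] at hbF₂
          have h1 : j = j₂ := congrArg Prod.fst hbF₂
          have h2 : b = b₂ := congrArg Prod.snd hbF₂
          rw [h1, h2]
      subst hF₂eq
      by_cases hba : b = a
      · exact hba
      · exfalso
        have hne2 : Lf t j b ≠ F' := by
          rw [hF'L]
          intro hh
          exact hba (Lf_inj hh).2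
        have hint := hM'd _ hF₂ _ hF'M' hne2
        have h3 : Sum.inl j ∈ Lf t j b ∩ F' := Finset.mem_inter.2
          ⟨mem_Lf_inl.2 ⟨by omega, le_refl j⟩, by rw [hF'L]; exact mem_Lf_inl.2 ⟨by omega, le_refl j⟩⟩
        rw [hint] at h3
        exact Finset.notMem_empty _ h3
    by_cases hGcase : ∃ b, G = Lf t j b
    · -- G is a leaf facet at j : swap the leaf
      obtain ⟨a₂, rfl⟩ := hGcase
      have ha₂a : a₂ ≠ a := by
        rintro rfl
        exact hpU (mem_biUnion_id.2 ⟨_, hGM, mem_Lf_inr.2 rfl⟩)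
      have ha₂gt : a < a₂ := by
        rcases lt_or_gt_of_ne ha₂a with h1 | h1
        · exfalso
          have hwU : Sum.inr (j, a₂) ∈ M.biUnion id :=
            mem_biUnion_id.2 ⟨_, hGM, mem_Lf_inr.2 rfl⟩
          have hwU' : Sum.inr (j, a₂) ∈ M'.biUnion id :=
            (agree _ (vkey_inr_lt_inr.2 (Or.inr ⟨rfl, h1⟩))).1 hwU
          exact absurd (hleafU' a₂ hwU') ha₂a
        · exact h1
      have hxK : Sum.inr (j, a₂) ∈ Lf t j a₂ := mem_Lf_inr.2 rfl
      have hval : insert (Sum.inr (j, a) : BroomVertex)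
          ((Lf t j a₂).erase (Sum.inr (j, a₂))) ∈ broomFacets h t ℓ := by
        rw [Lf, Finset.erase_insert (by simp)]
        exact mem_broomFacets_iff.2 (Or.inr ⟨j, a, hj2, hjh, haℓ, rfl⟩)
      exact finish _ hGM _ _ hxK hpU hpU'
        (vkey_inr_lt_inr.2 (Or.inr ⟨rfl, ha₂gt⟩)) hval
    · -- G is not a leaf facet at j : counting
      have hGnotLfj : ∀ b, Sum.inr (j, b) ∉ M.biUnion id :=
        fun b hb => hGcase ⟨b, hleafU b hb⟩
      -- no M-facet and no M'-facet other than F' contains inl j twice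
      have hins : (M'.biUnion id).filter (fun v => posn v < j + 1)
          = insert (Sum.inr (j, a)) ((M.biUnion id).filter (fun v => posn v < j + 1)) := by
        ext v
        simp only [Finset.mem_filter, Finset.mem_insert]
        constructor
        · rintro ⟨hv1, hv2⟩
          by_cases hvp : v = Sum.inr (j, a)
          · exact Or.inl hvp
          · refine Or.inr ⟨?_, hv2⟩
            rcases v with z | ⟨z, b⟩
            · rw [posn_inl] at hv2
              exact (agree _ (vkey_inl_lt_inr.2 (by omega))).2 hv1
            · rw [posn_inr] at hv2
              have hz : z ≤ j := by omega
              rcases lt_or_eq_of_le hz with hzj | hzj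
              · exact (agree _ (vkey_inr_lt_inr.2 (Or.inl hzj))).2 hv1
              · exfalso
                subst hzj
                exact hvp (by rw [hleafU' b hv1])
        · rintro (rfl | ⟨hv1, hv2⟩)
          · exact ⟨hpU', by rw [posn_inr]; omega⟩
          · refine ⟨?_, hv2⟩
            rcases v with z | ⟨z, b⟩
            · rw [posn_inl] at hv2
              exact (agree _ (vkey_inl_lt_inr.2 (by omega))).1 hv1
            · rw [posn_inr] at hv2
              have hz : z ≤ j := by omega
              rcases lt_or_eq_of_le hz with hzj | hzj
              · exact (agree _ (vkey_inr_lt_inr.2 (Or.inl hzj))).1 hv1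
              · exfalso
                subst hzj
                exact hGnotLfj b hv1
      have hpnot : Sum.inr (j, a) ∉ (M.biUnion id).filter (fun v => posn v < j + 1) :=
        fun hmem => hpU (Finset.mem_of_mem_filter _ hmem)
      have hcnt : ((M'.biUnion id).filter (fun v => posn v < j + 1)).card
          = ((M.biUnion id).filter (fun v => posn v < j + 1)).card + 1 := by
        rw [hins, Finset.card_insert_of_notMem hpnot]
      have hsplitM' : ∀ F ∈ M', (∀ v ∈ F, posn v < j + 1) ∨ (∀ v ∈ F, ¬ posn v < j + 1) := by
        intro F hF
        by_cases hFF' : F = F'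
        · subst hFF'
          left
          intro v hv
          rw [hF'L] at hv
          rcases v with z | ⟨z, b⟩
          · rw [mem_Lf_inl] at hv; rw [posn_inl]; omega
          · rw [mem_Lf_inr] at hv
            have : z = j := congrArg Prod.fst hv
            rw [posn_inr]; omega
        · have hq2 : Sum.inl j ∉ F := by
            intro hq3
            have hint := hM'd F hF F' hF'M' hFF'
            have h4 : Sum.inl j ∈ F ∩ F' := Finset.mem_inter.2
              ⟨hq3, by rw [hF'L]; exact mem_Lf_inl.2 ⟨by omega, le_refl j⟩⟩
            rw [hint] at h4
            exact Finset.notMem_empty _ h4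
          rcases facet_split ht (hM'f hF) hq2 with h1 | h1
          · exact Or.inl (fun v hv => by have := h1 v hv; omega)
          · exact Or.inr (fun v hv => by have := h1 v hv; omega)
      have cM' := count_below ht M' hM'f hM'd (j + 1) hsplitM'
      have hsplitMo : ∀ F ∈ M, F ≠ G → (∀ v ∈ F, posn v < j + 1) ∨
          (∀ v ∈ F, ¬ posn v < j + 1) := by
        intro F hF hne
        have hq2 : Sum.inl j ∉ F := by
          intro hq3
          have hint := hMd F hF G hGM hne
          have h4 : Sum.inl j ∈ F ∩ G := Finset.mem_inter.2 ⟨hq3, hjG⟩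
          rw [hint] at h4
          exact Finset.notMem_empty _ h4
        rcases facet_split ht (hMf hF) hq2 with h1 | h1
        · exact Or.inl (fun v hv => by have := h1 v hv; omega)
        · exact Or.inr (fun v hv => by have := h1 v hv; omega)
      by_cases hGlow : ∀ v ∈ G, posn v < j + 1
      · -- contradiction : t divides 1
        have hsplitM : ∀ F ∈ M, (∀ v ∈ F, posn v < j + 1) ∨
            (∀ v ∈ F, ¬ posn v < j + 1) := by
          intro F hF
          by_cases hFG : F = G
          · subst hFG; exact Or.inl hGlow
          · exact hsplitMo F hF hFG
        have cM := count_below ht M hMf hMd (j + 1) hsplitM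
        exfalso
        have heq4 : t * (M'.filter (fun F => ∀ v ∈ F, posn v < j + 1)).card
            = t * (M.filter (fun F => ∀ v ∈ F, posn v < j + 1)).card + 1 := by omega
        have := Nat.dvd_one.1 (dvd_of_mul_eq heq4)
        omega
      · have cM := count_below_straddle ht M hMf hMd (j + 1) G hGM hsplitMo hGlow
        -- compute the filter card of G and finish by descriptor
        rcases mem_broomFacets_iff.1 (hMf hGM) with ⟨i₂, hi₂, hGeq⟩ |
          ⟨j₂, a₂, hj₂, hj₂h, ha₂, hGeq⟩
        · -- G = Hf t i₂
          have hjGb : i₂ ≤ j ∧ j ≤ i₂ + t - 1 := by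
            have := hjG; rw [hGeq, mem_Hf_inl] at this; exact this
          have hr₀ : (G.filter (fun v => posn v < j + 1)).card = j + 1 - i₂ := by
            rw [hGeq, Hf, filter_posn_image_inl, Icc_filter_lt _ _ _ (by omega),
              Finset.card_image_of_injective _ Sum.inl_injective, Nat.card_Ico]
          have heq4 : t * (M'.filter (fun F => ∀ v ∈ F, posn v < j + 1)).card
              = t * ((M.erase G).filter (fun F => ∀ v ∈ F, posn v < j + 1)).card
                + (j + 1 - i₂ + 1) := by omega
          have hres := mul_eq_resolve ht heq4 (by omega)
          have hi₂eq : i₂ + t = j + 2 := by omega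
          -- the move : replace G by Lf t j a
          have hxK : Sum.inl (j + 1) ∈ G := by
            rw [hGeq, mem_Hf_inl]
            omega
          have hval : insert (Sum.inr (j, a) : BroomVertex)
              (G.erase (Sum.inl (j + 1))) ∈ broomFacets h t ℓ := by
            have heqL : insert (Sum.inr (j, a) : BroomVertex)
                (G.erase (Sum.inl (j + 1))) = Lf t j a := by
              rw [hGeq]
              ext v
              rcases v with z | ⟨z, b⟩
              · simp only [Finset.mem_insert, Finset.mem_erase, mem_Hf_inl, mem_Lf_inl,
                  Sum.inl.injEq]
                constructor
                · rintro (h1 | ⟨h1, h2⟩)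
                  · exact absurd h1 (by simp)
                  · have : z ≠ j + 1 := fun hz => h1 (by rw [hz])
                    omega
                · intro h1
                  refine Or.inr ⟨?_, by omega⟩
                  intro hz
                  rw [Sum.inl.injEq] at hz
                  omega
              · simp only [Finset.mem_insert, Finset.mem_erase, mem_Lf_inr]
                constructor
                · rintro (h1 | ⟨_, h1⟩)
                  · rw [Sum.inr.injEq] at h1
                    exact h1
                  · exact absurd h1 not_mem_Hf_inr
                · intro h1
                  rw [h1]
                  exact Or.inl rfl
            rw [heqL]
            exact mem_broomFacets_iff.2 (Or.inr ⟨j, a, hj2, hjh, haℓ, rfl⟩)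
          exact finish G hGM _ _ hxK hpU hpU' (vkey_inr_lt_inl.2 (by omega)) hval
        · -- G = Lf t j₂ a₂ with j₂ ≠ j : contradiction
          exfalso
          have hj₂ne : j₂ ≠ j := fun hh => hGcase ⟨a₂, by rw [hGeq, hh]⟩
          have hjGb : j₂ - (t - 2) ≤ j ∧ j ≤ j₂ := by
            have := hjG; rw [hGeq, mem_Lf_inl] at this; exact this
          have hjlt : j < j₂ := by omega
          have hr₀ : (G.filter (fun v => posn v < j + 1)).card = j + 1 - (j₂ - (t - 2)) := by
            rw [hGeq, Lf, Finset.filter_insert, if_neg (by rw [posn_inr]; omega),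
              filter_posn_image_inl, Icc_filter_lt _ _ _ (by omega),
              Finset.card_image_of_injective _ Sum.inl_injective, Nat.card_Ico]
          have heq4 : t * (M'.filter (fun F => ∀ v ∈ F, posn v < j + 1)).card
              = t * ((M.erase G).filter (fun F => ∀ v ∈ F, posn v < j + 1)).card
                + (j + 1 - (j₂ - (t - 2)) + 1) := by omega
          have hres := mul_eq_resolve ht heq4 (by omega)
          omega

end Exchange

section Final

lemma facets_ofFacets {V : Type} [DecidableEq V] (ℱ : Finset (Finset V)) (t : ℕ) (ht : 0 < t)
    (hcard : ∀ F ∈ ℱ, F.card = t) (hne : ℱ.Nonempty) : (ofFacets ℱ).facets = ℱ := by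
  classical
  have hfaces : ∀ G : Finset V, G ∈ (ofFacets ℱ).faces ↔ G = ∅ ∨ ∃ A ∈ ℱ, G ⊆ A := by
    intro G
    simp only [ofFacets, Finset.mem_insert, Finset.mem_biUnion, Finset.mem_powerset]
  ext F
  rw [SimplicialComplex.facets, Finset.mem_filter]
  constructor
  · rintro ⟨hFf, hFmax⟩
    rcases (hfaces F).1 hFf with rfl | ⟨A, hA, hFA⟩
    · exfalso
      obtain ⟨A, hA⟩ := hne
      have hAf : A ∈ (ofFacets ℱ).faces := (hfaces A).2 (Or.inr ⟨A, hA, subset_rfl⟩)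
      have h0 := hFmax A hAf (Finset.empty_subset A)
      have := hcard A hA
      rw [← h0] at this
      simp at this
      omega
    · have hAf : A ∈ (ofFacets ℱ).faces := (hfaces A).2 (Or.inr ⟨A, hA, subset_rfl⟩)
      have := hFmax A hAf hFA
      rw [this]
      exact hA
  · intro hF
    refine ⟨(hfaces F).2 (Or.inr ⟨F, hF, subset_rfl⟩), ?_⟩
    intro G hGf hFG
    rcases (hfaces G).1 hGf with rfl | ⟨A, hA, hGA⟩
    · exact Finset.subset_empty.1 hFG
    · have hFA : F ⊆ A := hFG.trans hGA
      have hFAeq : F = A := Finset.eq_of_subset_of_card_le hFA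
        (by rw [hcard F hF, hcard A hA])
      have hGF : G ⊆ F := by rw [hFAeq]; exact hGA
      exact Finset.Subset.antisymm hFG hGF

end Final

end BroomAux

/-- For the `t`-path simplicial tree `Γ_t` of a broom graph
containing a directed path on `t` vertices, the highest nonvanishing squarefree
power `I(Γ_t)^{[ν(Γ_t)]}` has linear quotients. -/
theorem broom_top_sqfreePower_hasLinearQuotients
    (K : Type) [Field K] (h t : ℕ) (ht : 2 ≤ t) (ℓ : ℕ → ℕ)
    (hpath : (broomFacets h t ℓ).Nonempty) :
    HasLinearQuotients
      (sqfreePower K (ofFacets (broomFacets h t ℓ))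
        (ofFacets (broomFacets h t ℓ)).matchingNumber) := by
  classical
  set Δ := ofFacets (broomFacets h t ℓ) with hΔ
  have hfacets : Δ.facets = broomFacets h t ℓ :=
    BroomAux.facets_ofFacets _ t (by omega) (fun F hF => BroomAux.card_facet ht hF) hpath
  set ν := Δ.matchingNumber with hν
  have hbdd : BddAbove {r : ℕ | ∃ M : Finset (Finset BroomVertex),
      Δ.IsMatching M ∧ M.card = r} := by
    refine ⟨(broomFacets h t ℓ).card, ?_⟩
    rintro r ⟨M, hM, rfl⟩
    exact Finset.card_le_card (by rw [← hfacets]; exact hM.1)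
  have hub : ∀ N : Finset (Finset BroomVertex), N ⊆ broomFacets h t ℓ →
      (∀ F ∈ N, ∀ G ∈ N, F ≠ G → F ∩ G = ∅) → N.card ≤ ν := by
    intro N h1 h2
    exact le_csSup hbdd ⟨N, ⟨by rw [hfacets]; exact h1, h2⟩, rfl⟩
  set MM : Finset (Finset (Finset BroomVertex)) :=
    (broomFacets h t ℓ).powerset.filter
      (fun M => (∀ F ∈ M, ∀ G ∈ M, F ≠ G → F ∩ G = ∅) ∧ M.card = ν) with hMM
  set E : Finset (Finset BroomVertex) := MM.image (fun M => M.biUnion id) with hE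
  have hdisjid : ∀ M : Finset (Finset BroomVertex),
      (∀ F ∈ M, ∀ G ∈ M, F ≠ G → F ∩ G = ∅) →
      ∀ F ∈ M, ∀ G ∈ M, F ≠ G → Disjoint (id F) (id G) := by
    intro M hM F hF G hG hne
    simp only [id_eq]
    rw [Finset.disjoint_iff_inter_eq_empty]
    exact hM F hF G hG hne
  have hprod : ∀ M : Finset (Finset BroomVertex), (∀ F ∈ M, ∀ G ∈ M, F ≠ G → F ∩ G = ∅) →
      (∏ F ∈ M, ∏ v ∈ F, (X v : MvPolynomial BroomVertex K))
        = monomial (BroomAux.indF (M.biUnion id)) 1 := by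
    intro M hM
    rw [← BroomAux.prod_X_eq (V := BroomVertex) K (M.biUnion id),
      Finset.prod_biUnion (fun F hF G hG hne =>
        hdisjid M hM F (Finset.mem_coe.1 hF) G (Finset.mem_coe.1 hG) hne)]
    simp only [id_eq]
  have hmemE : ∀ U : Finset BroomVertex, U ∈ E ↔ ∃ M : Finset (Finset BroomVertex),
      (M ⊆ broomFacets h t ℓ ∧ (∀ F ∈ M, ∀ G ∈ M, F ≠ G → F ∩ G = ∅) ∧ M.card = ν)
        ∧ M.biUnion id = U := by
    intro U
    rw [hE, Finset.mem_image]
    constructor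
    · rintro ⟨M, hM, rfl⟩
      rw [hMM, Finset.mem_filter] at hM
      obtain ⟨h1, h2, h3⟩ := hM
      exact ⟨M, ⟨Finset.mem_powerset.1 h1, h2, h3⟩, rfl⟩
    · rintro ⟨M, ⟨h1, h2, h3⟩, rfl⟩
      exact ⟨M, by rw [hMM, Finset.mem_filter]
                   exact ⟨Finset.mem_powerset.2 h1, h2, h3⟩, rfl⟩
  have hIdeal : sqfreePower K Δ ν = Ideal.span
      ((fun d => monomial d (1 : K)) '' (BroomAux.indF '' (E : Set (Finset BroomVertex)))) := by
    unfold sqfreePower matchPow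
    congr 1
    ext p
    constructor
    · rintro ⟨M, hMsub, hMd, hMc, rfl⟩
      refine ⟨BroomAux.indF (M.biUnion id), ⟨M.biUnion id, ?_, rfl⟩, (hprod M hMd).symm⟩
      rw [Finset.mem_coe, hmemE]
      exact ⟨M, ⟨by rw [← hfacets]; exact hMsub, hMd, hMc⟩, rfl⟩
    · rintro ⟨d, ⟨U, hU, rfl⟩, rfl⟩
      rw [Finset.mem_coe, hmemE] at hU
      obtain ⟨M, ⟨h1, h2, h3⟩, rfl⟩ := hU
      exact ⟨M, by rw [hfacets]; exact h1, h2, h3, (hprod M h2).symm⟩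
  have hcardE : ∀ U ∈ E, U.card = t * ν := by
    intro U hU
    obtain ⟨M, ⟨h1, h2, h3⟩, rfl⟩ := (hmemE U).1 hU
    rw [Finset.card_biUnion (hdisjid M h2)]
    have hcg : ∀ F ∈ M, (id F).card = t := by
      intro F hF
      rw [id_eq]
      exact BroomAux.card_facet ht (h1 hF)
    rw [Finset.sum_congr rfl hcg, Finset.sum_const, smul_eq_mul, h3, Nat.mul_comm]
  have hExch : ∀ U ∈ E, ∀ U' ∈ E, U ≠ U' → BroomAux.rOrd BroomAux.vkey U' U →
      ∃ W ∈ E, ∃ x y : BroomVertex, x ∈ U ∧ y ∉ U ∧ y ∈ U' ∧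
        BroomAux.vkey y < BroomAux.vkey x ∧ W = insert y (U.erase x) := by
    intro U hUE U' hU'E hne hr
    obtain ⟨M, ⟨hMf, hMd, hMc⟩, rfl⟩ := (hmemE U).1 hUE
    obtain ⟨M', ⟨hM'f, hM'd, hM'c⟩, rfl⟩ := (hmemE U').1 hU'E
    rcases hr with heq | ⟨p, hpU', hpU, hminp⟩
    · exact absurd heq.symm hne
    · obtain ⟨x, y, hxU, hyU, hyU', hlt, N, hNf, hNd, hNc, hNbi⟩ :=
        BroomAux.broom_exchange ht ν hub hMf hMd hMc hM'f hM'd hpU' hpU hminp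
      refine ⟨N.biUnion id, ?_, x, y, hxU, hyU, hyU', hlt, hNbi⟩
      rw [hmemE]
      exact ⟨N, ⟨hNf, hNd, hNc⟩, rfl⟩
  rw [hIdeal]
  exact BroomAux.master K BroomAux.vkey BroomAux.vkey_injective E (t * ν) hcardE hExch


end
end
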